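/- arXiv:1009.4890 — 4 statements merged into one kernel-verified Lean document; each statement's English description precedes it below -/
import Mathlib

section
/- The weak order on SYT_n restricts to segments: if S ≤_weak T in SYT_n, then st(S_[i,j]) ≤_weak st(T_[i,j]) in SYT_{j−i+1} for all 1 ≤ i < j ≤ n. -/
/-! Basic combinatorial setup: permutations in one-line notation as lists of
natural numbers, RSK insertion, standard Young tableaux as lists of rows,
the right weak Bruhat order and the weak order on standard Young tableaux. -/

/-- `w` is a permutation of `{1,…,n}` written in one-line notation. -/
def IsPermWord (n : ℕ) (w : List ℕ) : Prop := w.Perm (List.range' 1 n)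

/-- The left inversion set of a word `w` in one-line notation:
pairs `(a,b)` with `a < b` such that `a` occurs to the right of `b` in `w`. -/
def InvL (w : List ℕ) : Set (ℕ × ℕ) :=
  {p | p.1 < p.2 ∧ p.1 ∈ w ∧ p.2 ∈ w ∧ w.idxOf p.2 < w.idxOf p.1}

/-- The right weak Bruhat order, characterized by inclusion of left inversion sets. -/
def wordLE (u w : List ℕ) : Prop := InvL u ⊆ InvL w

/-- Schensted row insertion of a letter `x` into a row:
returns the new row together with the bumped letter, if any. -/
def insertRow : List ℕ → ℕ → List ℕ × Option ℕ
  | [], x => ([x], none)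
  | y :: ys, x =>
    if x < y then (x :: ys, some y)
    else
      let p := insertRow ys x
      (y :: p.1, p.2)

/-- Schensted insertion of a letter into a tableau (given as its list of rows). -/
def insertTab : List (List ℕ) → ℕ → List (List ℕ)
  | [], x => [[x]]
  | r :: rs, x =>
    let p := insertRow r x
    match p.2 with
    | none => p.1 :: rs
    | some y => p.1 :: insertTab rs y

/-- The RSK insertion tableau `I(w)` of a word `w`. -/
def RSK (w : List ℕ) : List (List ℕ) := w.foldl insertTab []

/-- The shape of a tableau: the list of row lengths. -/
def shape (t : List (List ℕ)) : List ℕ := t.map List.length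

/-- `t` is a standard Young tableau with `n` cells: rows strictly increase,
columns strictly increase (in particular row lengths weakly decrease),
there are no empty rows, and the entries are exactly `1,…,n`. -/
def IsSYT (n : ℕ) (t : List (List ℕ)) : Prop :=
  (∀ r ∈ t, r.Pairwise (· < ·)) ∧
  t.Chain' (fun r₁ r₂ => r₂.length ≤ r₁.length ∧ ∀ c < r₂.length, r₁.getD c 0 < r₂.getD c 0) ∧
  (∀ r ∈ t, r ≠ []) ∧
  t.flatten.Perm (List.range' 1 n)

/-- The (row) reading word of a tableau: rows read left to right,
starting from the bottom row. -/
def readWord (t : List (List ℕ)) : List ℕ := t.reverse.flatten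

/-- `st(w_[i,j])`: the subword of `w` consisting of the letters in `[i,j]`,
standardized by subtracting `i-1` from each letter. -/
def restr (w : List ℕ) (i j : ℕ) : List ℕ :=
  (w.filter (fun x => decide (i ≤ x ∧ x ≤ j))).map (fun x => x - (i - 1))

/-- `st(T_[i,j])`: the (standardized) jeu-de-taquin rectification of the
restriction of `T` to the entries in `[i,j]`; the rectification of a skew
tableau is computed as the insertion tableau of its reading word. -/
def restrTab (t : List (List ℕ)) (i j : ℕ) : List (List ℕ) :=
  RSK (restr (readWord t) i j)

/-- The relation generating the weak order on `SYT_n`: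
`S ≤ T` if some `σ` in the Knuth class of `S` and some `τ` in the Knuth class
of `T` satisfy `σ ≤ τ` in the right weak Bruhat order. -/
def tabRel (n : ℕ) (S T : List (List ℕ)) : Prop :=
  ∃ σ τ : List ℕ, IsPermWord n σ ∧ IsPermWord n τ ∧ RSK σ = S ∧ RSK τ = T ∧ wordLE σ τ

/-- Melnikov's weak order on `SYT_n`: the transitive closure of `tabRel`. -/
def tabLE (n : ℕ) (S T : List (List ℕ)) : Prop := Relation.TransGen (tabRel n) S T

/-- Strict weak order on `SYT_n`. -/
def tabLT (n : ℕ) (S T : List (List ℕ)) : Prop := tabLE n S T ∧ S ≠ T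

/-- `S ⋖ T` in the weak order on `SYT_n`. -/
def tabCov (n : ℕ) (S T : List (List ℕ)) : Prop :=
  tabLT n S T ∧ ∀ Q, IsSYT n Q → ¬ (tabLT n S Q ∧ tabLT n Q T)

/-- `S ⋖ T` in the weak order within the subset of `SYT_n` cut out by `P`. -/
def tabCovIn (n : ℕ) (P : List (List ℕ) → Prop) (S T : List (List ℕ)) : Prop :=
  tabLT n S T ∧ ∀ Q, IsSYT n Q → P Q → ¬ (tabLT n S Q ∧ tabLT n Q T)

/-- The left descent set of a permutation word. -/
def DesL (n : ℕ) (w : List ℕ) : Set ℕ :=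
  {i | 1 ≤ i ∧ i < n ∧ w.idxOf (i + 1) < w.idxOf i}

/-- Index of the row of `t` containing the entry `v`. -/
def rowOf (t : List (List ℕ)) (v : ℕ) : ℕ := t.findIdx (fun r => decide (v ∈ r))

/-- The descent set of a standard Young tableau with `n` cells. -/
def DesT (n : ℕ) (t : List (List ℕ)) : Set ℕ :=
  {i | 1 ≤ i ∧ i < n ∧ rowOf t i < rowOf t (i + 1)}

/-- The transpose (conjugate) of a tableau. -/
def transposeTab (t : List (List ℕ)) : List (List ℕ) :=
  (List.range (t.headD []).length).map (fun c => t.filterMap (fun r => r[c]?))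

/-- Schützenberger's evacuation `T^evac`: the insertion tableau of the word
obtained from any word in the Knuth class of `T` (here, its reading word) by
reversing it and complementing each letter `x ↦ n+1-x`. -/
def evacTab (n : ℕ) (t : List (List ℕ)) : List (List ℕ) :=
  RSK (((readWord t).map (fun x => n + 1 - x)).reverse)

/-- Dominance order on partitions (as lists): `domLE l m` iff every partial
sum of `l` is at most the corresponding partial sum of `m`. -/
def domLE (l m : List ℕ) : Prop := ∀ k, (l.take k).sum ≤ (m.take k).sum

/-- The inner subtableau `T_[1,k]` of a standard Young tableau:
the cells with entries `1,…,k`. -/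
def innerTab (k : ℕ) (t : List (List ℕ)) : List (List ℕ) :=
  (t.map (fun r => r.filter (fun x => decide (x ≤ k)))).filter (fun r => !r.isEmpty)

/-- The inner tableau translation map `V_[R,R']`: in a tableau `t` with inner
tableau `R`, replace the subtableau `R` by the same-shape tableau `R'`. -/
def replaceInner (R R' t : List (List ℕ)) : List (List ℕ) :=
  (List.range t.length).map
    (fun r => R'.getD r [] ++ (t.getD r []).drop (R.getD r []).length)

/-- Increase all entries of a tableau by `k`. -/
def shiftTab (k : ℕ) (t : List (List ℕ)) : List (List ℕ) := t.map (List.map (· + k))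

/-- Concatenate two tableaux row by row. -/
def rowCat (S T : List (List ℕ)) : List (List ℕ) :=
  (List.range (max S.length T.length)).map (fun r => S.getD r [] ++ T.getD r [])

/-- `S \ T`: rows obtained by concatenating the rows of `T̄` (entries of `T`
shifted up by `k`) to the right of the rows of `S`, where `S ∈ SYT_k`. -/
def tabUnder (k : ℕ) (S T : List (List ℕ)) : List (List ℕ) := rowCat S (shiftTab k T)

/-- `S / T`: columns obtained by concatenating the columns of `T̄` (entries of
`T` shifted up by `k`) under the columns of `S`, where `S ∈ SYT_k`. -/
def tabOver (k : ℕ) (S T : List (List ℕ)) : List (List ℕ) :=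
  transposeTab (rowCat (transposeTab S) (transposeTab (shiftTab k T)))

/-- Reverse row bumping: replace the largest entry of the row smaller than `x`
by `x`, returning the new row and the entry that was bumped out upward. -/
def revBumpRow : List ℕ → ℕ → List ℕ × ℕ
  | [], x => ([], x)
  | [y], x => if y < x then ([x], y) else ([y], x)
  | y :: z :: ys, x =>
    if z < x then
      let p := revBumpRow (z :: ys) x
      (y :: p.1, p.2)
    else (x :: z :: ys, y)

/-- Reverse insertion of a value `x` upward through a stack of rows
(listed top to bottom, processed bottom to top). -/
def revInsertAux : List (List ℕ) → ℕ → List (List ℕ) × ℕ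
  | [], x => ([], x)
  | r :: rs, x =>
    let p := revInsertAux rs x
    let q := revBumpRow r p.2
    (q.1 :: p.1, q.2)

/-- `T↑A` and `η(T↑A)`: reverse RSK insertion applied to the tableau `t`
through the corner cell at the end of row `r`; returns the resulting tableau
together with the letter that leaves the tableau. -/
def revInsert (t : List (List ℕ)) (r : ℕ) : List (List ℕ) × ℕ :=
  let row := t.getD r []
  let p := revInsertAux (t.take r) (row.getLastD 0)
  ((p.1 ++ [row.dropLast] ++ t.drop (r + 1)).filter (fun l => !l.isEmpty), p.2)

/-- A partition (as a list of row lengths) is a hook `(a,1,1,…,1)`. -/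
def IsHook (sh : List ℕ) : Prop := ∀ a ∈ sh.tail, a = 1

/-! ### Auxiliary lemmas -/

section Aux

open List

lemma insertRow_all_lt {r : List ℕ} {x : ℕ} (h : ∀ e ∈ r, e < x) :
    insertRow r x = (r ++ [x], none) := by
  induction r with
  | nil => rfl
  | cons a r ih =>
    have ha : ¬ x < a := Nat.not_lt.2 (le_of_lt (h a (by simp)))
    simp [insertRow, ha, ih (fun e he => h e (by simp [he]))]

lemma insertRow_bump {m b : List ℕ} {x c : ℕ} (hm : ∀ e ∈ m, e < x) (hc : x < c) :
    insertRow (m ++ c :: b) x = (m ++ x :: b, some c) := by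
  induction m with
  | nil => simp [insertRow, hc]
  | cons a m ih =>
    have ha : ¬ x < a := Nat.not_lt.2 (le_of_lt (hm a (by simp)))
    simp [insertRow, ha, ih (fun e he => hm e (by simp [he]))]

lemma insertTab_of_none {r r' : List ℕ} {rs : List (List ℕ)} {x : ℕ}
    (h : insertRow r x = (r', none)) : insertTab (r :: rs) x = r' :: rs := by
  simp [insertTab, h]

lemma insertTab_of_some {r r' : List ℕ} {rs : List (List ℕ)} {x c : ℕ}
    (h : insertRow r x = (r', some c)) : insertTab (r :: rs) x = r' :: insertTab rs c := by
  simp [insertTab, h]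

lemma insertTab_ne_nil (t : List (List ℕ)) (x : ℕ) : insertTab t x ≠ [] := by
  cases t with
  | nil => simp [insertTab]
  | cons r rs =>
    unfold insertTab
    rcases h : insertRow r x with ⟨r', o⟩
    cases o <;> simp

/-- all entries of a sorted decomposition -/
lemma sorted_decomp {m b : List ℕ} {c : ℕ} (h : (m ++ c :: b).Pairwise (· < ·)) :
    m.Pairwise (· < ·) ∧ b.Pairwise (· < ·) ∧ (∀ e ∈ m, e < c) ∧ (∀ e ∈ b, c < e) ∧
      (∀ e ∈ m, ∀ f ∈ b, e < f) := by
  rw [List.pairwise_append] at h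
  obtain ⟨h1, h2, h3⟩ := h
  rw [List.pairwise_cons] at h2
  refine ⟨h1, h2.2, fun e he => h3 e he c (by simp), h2.1, fun e he f hf => h3 e he f (by simp [hf])⟩

lemma row_split {r : List ℕ} {x : ℕ} (hs : r.Pairwise (· < ·)) (hx : x ∉ r) :
    (∀ e ∈ r, e < x) ∨ ∃ m c b, r = m ++ c :: b ∧ (∀ e ∈ m, e < x) ∧ x < c := by
  induction r with
  | nil => exact Or.inl (by simp)
  | cons a r ih =>
    rcases Nat.lt_trichotomy a x with hax | hax | hax
    · rcases ih hs.of_cons (fun h => hx (by simp [h])) with h | ⟨m, c, b, rfl, hm, hc⟩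
      · exact Or.inl (by simpa [hax] using h)
      · exact Or.inr ⟨a :: m, c, b, by simp, by simpa [hax] using hm, hc⟩
    · exact absurd (hax ▸ (List.mem_cons_self (a := a) (l := r))) hx
    · exact Or.inr ⟨[], a, r, by simp, by simp, hax⟩

end Aux

section Knuth

open List

lemma insertRow_bump_head {b : List ℕ} {x c : ℕ} (hc : x < c) :
    insertRow (c :: b) x = (x :: b, some c) := by
  simp [insertRow, hc]

/-- head-cons on the first row of a tableau -/
def consHead (h : ℕ) : List (List ℕ) → List (List ℕ)
  | [] => [[h]]
  | r :: rs => (h :: r) :: rs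

lemma insertTab_consHead {h w : ℕ} (hw : ¬ w < h) (ρ : List ℕ) (ρs : List (List ℕ)) :
    insertTab ((h :: ρ) :: ρs) w = consHead h (insertTab (ρ :: ρs) w) := by
  rcases hr : insertRow ρ w with ⟨r', o⟩
  have h2 : insertRow (h :: ρ) w = (h :: r', o) := by simp [insertRow, hw, hr]
  cases o with
  | none => rw [insertTab_of_none h2, insertTab_of_none hr]; rfl
  | some c => rw [insertTab_of_some h2, insertTab_of_some hr]; rfl

lemma insertTab_consHead' {h w : ℕ} (hw : ¬ w < h) {T : List (List ℕ)} (hT : T ≠ []) :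
    insertTab (consHead h T) w = consHead h (insertTab T w) := by
  cases T with
  | nil => exact absurd rfl hT
  | cons r rs => exact insertTab_consHead hw r rs

lemma nodup_cons3 {a b c : ℕ} {l : List ℕ} (hab : a < b) (hbc : b < c)
    (ha : a ∉ l) (hb : b ∉ l) (hc : c ∉ l) (hl : l.Nodup) : (a :: b :: c :: l).Nodup := by
  simp only [List.nodup_cons, List.mem_cons, not_or]
  exact ⟨⟨by omega, by omega, ha⟩, ⟨by omega, hb⟩, hc, hl⟩

/-- The two Knuth moves for the empty first row. -/
lemma knuth_nilrow (rs : List (List ℕ)) {x y z : ℕ} (hxy : x < y) (hyz : y < z) :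
    (insertTab (insertTab (insertTab ([] :: rs) x) z) y =
      insertTab (insertTab (insertTab ([] :: rs) z) x) y) ∧
    (insertTab (insertTab (insertTab ([] :: rs) y) x) z =
      insertTab (insertTab (insertTab ([] :: rs) y) z) x) := by
  have hxz : x < z := hxy.trans hyz
  constructor
  · have e1 : insertTab ([] :: rs) x = [x] :: rs := insertTab_of_none rfl
    have e2 : insertRow [x] z = ([x, z], none) := by simp [insertRow, Nat.not_lt.2 hxz.le]
    have e3 : insertRow [x, z] y = ([x, y], some z) := by
      simp [insertRow, Nat.not_lt.2 hxy.le, hyz]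
    have e4 : insertTab ([] :: rs) z = [z] :: rs := insertTab_of_none rfl
    have e5 : insertRow [z] x = ([x], some z) := insertRow_bump_head hxz
    have e6 : insertRow [x] y = ([x, y], none) := by simp [insertRow, Nat.not_lt.2 hxy.le]
    rw [e1, insertTab_of_none e2, insertTab_of_some e3, e4, insertTab_of_some e5,
      insertTab_of_none e6]
  · have e1 : insertTab ([] :: rs) y = [y] :: rs := insertTab_of_none rfl
    have e2 : insertRow [y] x = ([x], some y) := insertRow_bump_head hxy
    have e3 : insertRow [x] z = ([x, z], none) := by simp [insertRow, Nat.not_lt.2 hxz.le]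
    have e4 : insertRow [y] z = ([y, z], none) := by simp [insertRow, Nat.not_lt.2 hyz.le]
    have e5 : insertRow [y, z] x = ([x, z], some y) := by simp [insertRow, hxy]
    rw [e1, insertTab_of_some e2, insertTab_of_none e3, insertTab_of_none e4,
      insertTab_of_some e5]

end Knuth

section KnuthMain

open List

/-- The heart of Knuth's lemma: both elementary moves commute with triple
insertion, for a tableau whose nonempty first row has all entries `> x`.
The inductive hypotheses about the lower rows are abstract; the letters fed
to them all come from the first row or from `{y, z}`. -/
lemma knuth_mainrow (h : ℕ) (rt : List ℕ) (rs : List (List ℕ)) (x y z : ℕ)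
    (hsr : (h :: rt).Pairwise (· < ·))
    (hxy : x < y) (hyz : y < z) (hxh : x < h)
    (hyr : y ∉ h :: rt) (hzr : z ∉ h :: rt)
    (IH1 : ∀ a b c : ℕ, a < b → b < c →
      (a ∈ h :: rt ∨ a = y ∨ a = z) → (b ∈ h :: rt ∨ b = y ∨ b = z) →
      (c ∈ h :: rt ∨ c = y ∨ c = z) →
      insertTab (insertTab (insertTab rs a) c) b = insertTab (insertTab (insertTab rs c) a) b)
    (IH2 : ∀ a b c : ℕ, a < b → b < c →
      (a ∈ h :: rt ∨ a = y ∨ a = z) → (b ∈ h :: rt ∨ b = y ∨ b = z) →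
      (c ∈ h :: rt ∨ c = y ∨ c = z) →
      insertTab (insertTab (insertTab rs b) a) c = insertTab (insertTab (insertTab rs b) c) a) :
    (insertTab (insertTab (insertTab ((h :: rt) :: rs) x) z) y =
      insertTab (insertTab (insertTab ((h :: rt) :: rs) z) x) y) ∧
    (insertTab (insertTab (insertTab ((h :: rt) :: rs) y) x) z =
      insertTab (insertTab (insertTab ((h :: rt) :: rs) y) z) x) := by
  have hxz : x < z := hxy.trans hyz
  have hrt : ∀ e ∈ rt, h < e := by
    have := hsr; rw [List.pairwise_cons] at this; exact this.1
  constructor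
  · -- MOVE 1 : x z y ~ z x y
    rcases row_split hsr hzr with hC1 | ⟨M, D, B, heq, hM, hzD⟩
    · -- C1 : every entry of the first row is < z
      have e1 : insertRow (h :: rt) x = (x :: rt, some h) := insertRow_bump_head hxh
      have e2 : insertRow (x :: rt) z = ((x :: rt) ++ [z], none) := by
        apply insertRow_all_lt; intro e he
        rcases List.mem_cons.1 he with rfl | he
        · exact hxz
        · exact hC1 e (by simp [he])
      have e4 : insertRow (h :: rt) z = ((h :: rt) ++ [z], none) := insertRow_all_lt hC1
      have e5 : insertRow ((h :: rt) ++ [z]) x = (x :: (rt ++ [z]), some h) := by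
        rw [List.cons_append]; exact insertRow_bump_head hxh
      have hsrt : rt.Pairwise (· < ·) := hsr.of_cons
      have hyrt : y ∉ rt := fun hy => hyr (by simp [hy])
      rcases row_split hsrt hyrt with hC1a | ⟨p, e, q, heq, hp, hye⟩
      · -- C1a : all of rt < y
        have e3 : insertRow ((x :: rt) ++ [z]) y = ((x :: rt) ++ [y], some z) := by
          have hl : (x :: rt) ++ [z] = (x :: rt) ++ z :: [] := rfl
          rw [hl]
          refine insertRow_bump ?_ hyz
          intro f hf
          rcases List.mem_cons.1 hf with rfl | hf
          · exact hxy
          · exact hC1a f hf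
        have e6 : insertRow (x :: (rt ++ [z])) y = ((x :: rt) ++ [y], some z) := by
          have hl : x :: (rt ++ [z]) = (x :: rt) ++ z :: [] := by simp
          rw [hl]
          refine insertRow_bump ?_ hyz
          intro f hf
          rcases List.mem_cons.1 hf with rfl | hf
          · exact hxy
          · exact hC1a f hf
        rw [insertTab_of_some e1, insertTab_of_none e2, insertTab_of_some e3,
          insertTab_of_none e4, insertTab_of_some e5, insertTab_of_some e6]
      · -- C1b : rt = p ++ e :: q with p < y < e  (and e < z)
        subst heq
        have e3 : insertRow ((x :: (p ++ e :: q)) ++ [z]) y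
            = ((x :: p) ++ y :: (q ++ [z]), some e) := by
          have hl : (x :: (p ++ e :: q)) ++ [z] = (x :: p) ++ e :: (q ++ [z]) := by simp
          rw [hl]
          refine insertRow_bump ?_ hye
          intro f hf
          rcases List.mem_cons.1 hf with rfl | hf
          · exact hxy
          · exact hp f hf
        have e6 : insertRow (x :: ((p ++ e :: q) ++ [z])) y
            = ((x :: p) ++ y :: (q ++ [z]), some e) := by
          have hl : x :: ((p ++ e :: q) ++ [z]) = (x :: p) ++ e :: (q ++ [z]) := by simp
          rw [hl]
          refine insertRow_bump ?_ hye
          intro f hf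
          rcases List.mem_cons.1 hf with rfl | hf
          · exact hxy
          · exact hp f hf
        rw [insertTab_of_some e1, insertTab_of_none e2, insertTab_of_some e3,
          insertTab_of_none e4, insertTab_of_some e5, insertTab_of_some e6]
    · -- C2 : h :: rt = M ++ D :: B with M < z < D
      obtain ⟨hsM, hsB, hMD, hDB, hMB⟩ := sorted_decomp (heq ▸ hsr)
      cases M with
      | nil =>
        have hh : h = D ∧ rt = B := by simpa using heq
        obtain ⟨rfl, rfl⟩ := hh
        have hzh : z < h := hzD
        cases rt with
        | nil =>
          have e1 : insertRow [h] x = ([x], some h) := insertRow_bump_head hxh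
          have e2 : insertRow [x] z = ([x, z], none) := by
            simp [insertRow, Nat.not_lt.2 hxz.le]
          have e3 : insertRow [x, z] y = ([x, y], some z) := by
            simp [insertRow, Nat.not_lt.2 hxy.le, hyz]
          have e4 : insertRow [h] z = ([z], some h) := insertRow_bump_head hzh
          have e5 : insertRow [z] x = ([x], some z) := insertRow_bump_head hxz
          have e6 : insertRow [x] y = ([x, y], none) := by
            simp [insertRow, Nat.not_lt.2 hxy.le]
          rw [insertTab_of_some e1, insertTab_of_none e2, insertTab_of_some e3,
            insertTab_of_some e4, insertTab_of_some e5, insertTab_of_none e6]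
        | cons B1 B' =>
          have hhB1 : h < B1 := hrt B1 (by simp)
          have e1 : insertRow (h :: B1 :: B') x = (x :: B1 :: B', some h) :=
            insertRow_bump_head hxh
          have e2 : insertRow (x :: B1 :: B') z = (x :: z :: B', some B1) := by
            simp [insertRow, Nat.not_lt.2 hxz.le, hzh.trans hhB1]
          have e3 : insertRow (x :: z :: B') y = (x :: y :: B', some z) := by
            simp [insertRow, Nat.not_lt.2 hxy.le, hyz]
          have e4 : insertRow (h :: B1 :: B') z = (z :: B1 :: B', some h) :=
            insertRow_bump_head hzh
          have e5 : insertRow (z :: B1 :: B') x = (x :: B1 :: B', some z) :=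
            insertRow_bump_head hxz
          have e6 : insertRow (x :: B1 :: B') y = (x :: y :: B', some B1) := by
            simp [insertRow, Nat.not_lt.2 hxy.le, (hyz.trans hzh).trans hhB1]
          rw [insertTab_of_some e1, insertTab_of_some e2, insertTab_of_some e3,
            insertTab_of_some e4, insertTab_of_some e5, insertTab_of_some e6]
          have key := IH2 z h B1 hzh hhB1 (Or.inr (Or.inr rfl)) (Or.inl (by simp))
            (Or.inl (by simp))
          rw [key]
      | cons M1 M' =>
        have hh : h = M1 ∧ rt = M' ++ D :: B := by simpa using heq
        obtain ⟨rfl, hrteq⟩ := hh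
        subst hrteq
        have hhz : h < z := hM h (by simp)
        have hM' : ∀ e ∈ M', e < z := fun e he => hM e (by simp [he])
        have e1 : insertRow (h :: (M' ++ D :: B)) x = (x :: (M' ++ D :: B), some h) :=
          insertRow_bump_head hxh
        have e2 : insertRow (x :: (M' ++ D :: B)) z = ((x :: M') ++ z :: B, some D) := by
          have hl : x :: (M' ++ D :: B) = (x :: M') ++ D :: B := by simp
          rw [hl]
          refine insertRow_bump ?_ hzD
          intro f hf
          rcases List.mem_cons.1 hf with rfl | hf
          · exact hxz
          · exact hM' f hf
        have e4 : insertRow (h :: (M' ++ D :: B)) z = ((h :: M') ++ z :: B, some D) := by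
          have hl : h :: (M' ++ D :: B) = (h :: M') ++ D :: B := by simp
          rw [hl]
          exact insertRow_bump hM hzD
        have e5 : insertRow ((h :: M') ++ z :: B) x = (x :: (M' ++ z :: B), some h) := by
          rw [List.cons_append]; exact insertRow_bump_head hxh
        have hsM' : M'.Pairwise (· < ·) := hsM.of_cons
        have hyM' : y ∉ M' := fun hy => hyr (by simp [hy])
        rcases row_split hsM' hyM' with hMa | ⟨p, e, q, heq2, hp, hye⟩
        · -- C2ii-a : all of M' < y
          have e3 : insertRow ((x :: M') ++ z :: B) y = ((x :: M') ++ y :: B, some z) := by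
            refine insertRow_bump ?_ hyz
            intro f hf
            rcases List.mem_cons.1 hf with rfl | hf
            · exact hxy
            · exact hMa f hf
          have e6 : insertRow (x :: (M' ++ z :: B)) y = ((x :: M') ++ y :: B, some z) := by
            have hl : x :: (M' ++ z :: B) = (x :: M') ++ z :: B := by simp
            rw [hl]
            refine insertRow_bump ?_ hyz
            intro f hf
            rcases List.mem_cons.1 hf with rfl | hf
            · exact hxy
            · exact hMa f hf
          rw [insertTab_of_some e1, insertTab_of_some e2, insertTab_of_some e3,
            insertTab_of_some e4, insertTab_of_some e5, insertTab_of_some e6]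
          have key := IH1 h z D hhz hzD (Or.inl (by simp)) (Or.inr (Or.inr rfl))
            (Or.inl (by rw [heq]; simp))
          rw [key]
        · -- C2ii-b : M' = p ++ e :: q with p < y < e (and e < z < D)
          subst heq2
          have e3 : insertRow ((x :: (p ++ e :: q)) ++ z :: B) y
              = ((x :: p) ++ y :: (q ++ z :: B), some e) := by
            have hl : (x :: (p ++ e :: q)) ++ z :: B = (x :: p) ++ e :: (q ++ z :: B) := by
              simp
            rw [hl]
            refine insertRow_bump ?_ hye
            intro f hf
            rcases List.mem_cons.1 hf with rfl | hf
            · exact hxy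
            · exact hp f hf
          have e6 : insertRow (x :: ((p ++ e :: q) ++ z :: B)) y
              = ((x :: p) ++ y :: (q ++ z :: B), some e) := by
            have hl : x :: ((p ++ e :: q) ++ z :: B) = (x :: p) ++ e :: (q ++ z :: B) := by
              simp
            rw [hl]
            refine insertRow_bump ?_ hye
            intro f hf
            rcases List.mem_cons.1 hf with rfl | hf
            · exact hxy
            · exact hp f hf
          rw [insertTab_of_some e1, insertTab_of_some e2, insertTab_of_some e3,
            insertTab_of_some e4, insertTab_of_some e5, insertTab_of_some e6]
          have hhe : h < e := hrt e (by simp)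
          have heD : e < D := (hM' e (by simp)).trans hzD
          have key := IH1 h e D hhe heD (Or.inl (by simp)) (Or.inl (by simp))
            (Or.inl (by rw [heq]; simp))
          rw [key]
  · -- MOVE 2 : y x z ~ y z x
    rcases row_split hsr hyr with hA | ⟨m, β, b, heq, hm, hyβ⟩
    · -- Case A : every entry of the first row is < y
      have e1 : insertRow (h :: rt) y = ((h :: rt) ++ [y], none) := insertRow_all_lt hA
      have e2 : insertRow ((h :: rt) ++ [y]) x = (x :: (rt ++ [y]), some h) := by
        rw [List.cons_append]; exact insertRow_bump_head hxh
      have e3 : insertRow (x :: (rt ++ [y])) z = ((x :: (rt ++ [y])) ++ [z], none) := by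
        apply insertRow_all_lt; intro f hf
        rcases List.mem_cons.1 hf with rfl | hf
        · exact hxz
        · rcases List.mem_append.1 hf with hf | hf
          · exact (hA f (by simp [hf])).trans hyz
          · simp at hf; omega
      have e4 : insertRow ((h :: rt) ++ [y]) z = (((h :: rt) ++ [y]) ++ [z], none) := by
        apply insertRow_all_lt; intro f hf
        rcases List.mem_append.1 hf with hf | hf
        · exact (hA f hf).trans hyz
        · simp at hf; omega
      have e5 : insertRow (((h :: rt) ++ [y]) ++ [z]) x
          = (x :: ((rt ++ [y]) ++ [z]), some h) := by
        rw [List.cons_append, List.cons_append]; exact insertRow_bump_head hxh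
      rw [insertTab_of_none e1, insertTab_of_some e2, insertTab_of_none e3,
        insertTab_of_none e4, insertTab_of_some e5]
      simp
    · -- Case B : h :: rt = m ++ β :: b with m < y < β
      obtain ⟨hsm, hsb, hmβ, hβb, hmb⟩ := sorted_decomp (heq ▸ hsr)
      have hzb : z ∉ b := fun hz => hzr (by rw [heq]; simp [hz])
      cases m with
      | nil =>
        have hh : h = β ∧ rt = b := by simpa using heq
        obtain ⟨rfl, rfl⟩ := hh
        have e1 : insertRow (h :: rt) y = (y :: rt, some h) := insertRow_bump_head hyβ
        have e2 : insertRow (y :: rt) x = (x :: rt, some y) := insertRow_bump_head hxy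
        rcases row_split hsb hzb with hBa | ⟨p, d, q, heq2, hp, hzd⟩
        · -- B2a : all of b < z
          have e3 : insertRow (x :: rt) z = ((x :: rt) ++ [z], none) := by
            apply insertRow_all_lt; intro f hf
            rcases List.mem_cons.1 hf with rfl | hf
            · exact hxz
            · exact hBa f hf
          have e4 : insertRow (y :: rt) z = ((y :: rt) ++ [z], none) := by
            apply insertRow_all_lt; intro f hf
            rcases List.mem_cons.1 hf with rfl | hf
            · exact hyz
            · exact hBa f hf
          have e5 : insertRow ((y :: rt) ++ [z]) x = (x :: (rt ++ [z]), some y) := by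
            rw [List.cons_append]; exact insertRow_bump_head hxy
          rw [insertTab_of_some e1, insertTab_of_some e2, insertTab_of_none e3,
            insertTab_of_none e4, insertTab_of_some e5]
          simp
        · -- B2b : b = p ++ d :: q with p < z < d
          subst heq2
          have e3 : insertRow (x :: (p ++ d :: q)) z = ((x :: p) ++ z :: q, some d) := by
            have hl : x :: (p ++ d :: q) = (x :: p) ++ d :: q := by simp
            rw [hl]
            refine insertRow_bump ?_ hzd
            intro f hf
            rcases List.mem_cons.1 hf with rfl | hf
            · exact hxz
            · exact hp f hf
          have e4 : insertRow (y :: (p ++ d :: q)) z = ((y :: p) ++ z :: q, some d) := by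
            have hl : y :: (p ++ d :: q) = (y :: p) ++ d :: q := by simp
            rw [hl]
            refine insertRow_bump ?_ hzd
            intro f hf
            rcases List.mem_cons.1 hf with rfl | hf
            · exact hyz
            · exact hp f hf
          have e5 : insertRow ((y :: p) ++ z :: q) x = (x :: (p ++ z :: q), some y) := by
            rw [List.cons_append]; exact insertRow_bump_head hxy
          rw [insertTab_of_some e1, insertTab_of_some e2, insertTab_of_some e3,
            insertTab_of_some e4, insertTab_of_some e5]
          have hβd : h < d := hβb d (by simp)
          have key := IH2 y h d hyβ hβd (Or.inr (Or.inl rfl)) (Or.inl (by simp))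
            (Or.inl (by simp))
          rw [key]
          simp
      | cons m1 m' =>
        have hh : h = m1 ∧ rt = m' ++ β :: b := by simpa using heq
        obtain ⟨rfl, hrteq⟩ := hh
        subst hrteq
        have hm'y : ∀ e ∈ m', e < y := fun e he => hm e (by simp [he])
        have e1 : insertRow (h :: (m' ++ β :: b)) y = ((h :: m') ++ y :: b, some β) := by
          have hl : h :: (m' ++ β :: b) = (h :: m') ++ β :: b := by simp
          rw [hl]; exact insertRow_bump hm hyβ
        have e2 : insertRow ((h :: m') ++ y :: b) x = (x :: (m' ++ y :: b), some h) := by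
          rw [List.cons_append]; exact insertRow_bump_head hxh
        rcases row_split hsb hzb with hBa | ⟨p, d, q, heq2, hp, hzd⟩
        · -- B1a : all of b < z
          have e3 : insertRow (x :: (m' ++ y :: b)) z
              = ((x :: (m' ++ y :: b)) ++ [z], none) := by
            apply insertRow_all_lt; intro f hf
            rcases List.mem_cons.1 hf with rfl | hf
            · exact hxz
            · rcases List.mem_append.1 hf with hf | hf
              · exact (hm'y f hf).trans hyz
              · rcases List.mem_cons.1 hf with rfl | hf
                · exact hyz
                · exact hBa f hf
          have e4 : insertRow ((h :: m') ++ y :: b) z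
              = (((h :: m') ++ y :: b) ++ [z], none) := by
            apply insertRow_all_lt; intro f hf
            rcases List.mem_append.1 hf with hf | hf
            · exact (hm f hf).trans hyz
            · rcases List.mem_cons.1 hf with rfl | hf
              · exact hyz
              · exact hBa f hf
          have e5 : insertRow (((h :: m') ++ y :: b) ++ [z]) x
              = (x :: ((m' ++ y :: b) ++ [z]), some h) := by
            rw [List.cons_append, List.cons_append]; exact insertRow_bump_head hxh
          rw [insertTab_of_some e1, insertTab_of_some e2, insertTab_of_none e3,
            insertTab_of_none e4, insertTab_of_some e5]
          simp
        · -- B1b : b = p ++ d :: q with p < z < d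
          subst heq2
          have e3 : insertRow (x :: (m' ++ y :: (p ++ d :: q))) z
              = ((x :: (m' ++ y :: p)) ++ z :: q, some d) := by
            have hl : x :: (m' ++ y :: (p ++ d :: q)) = (x :: (m' ++ y :: p)) ++ d :: q := by
              simp
            rw [hl]
            refine insertRow_bump ?_ hzd
            intro f hf
            rcases List.mem_cons.1 hf with rfl | hf
            · exact hxz
            · rcases List.mem_append.1 hf with hf | hf
              · exact (hm'y f hf).trans hyz
              · rcases List.mem_cons.1 hf with rfl | hf
                · exact hyz
                · exact hp f hf
          have e4 : insertRow ((h :: m') ++ y :: (p ++ d :: q)) z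
              = (((h :: m') ++ y :: p) ++ z :: q, some d) := by
            have hl : (h :: m') ++ y :: (p ++ d :: q) = ((h :: m') ++ y :: p) ++ d :: q := by
              simp
            rw [hl]
            refine insertRow_bump ?_ hzd
            intro f hf
            rcases List.mem_append.1 hf with hf | hf
            · exact (hm f hf).trans hyz
            · rcases List.mem_cons.1 hf with rfl | hf
              · exact hyz
              · exact hp f hf
          have e5 : insertRow (((h :: m') ++ y :: p) ++ z :: q) x
              = (x :: ((m' ++ y :: p) ++ z :: q), some h) := by
            rw [List.cons_append, List.cons_append]; exact insertRow_bump_head hxh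
          rw [insertTab_of_some e1, insertTab_of_some e2, insertTab_of_some e3,
            insertTab_of_some e4, insertTab_of_some e5]
          have hβd : β < d := hβb d (by simp)
          have hm1β : h < β := hmβ h (by simp)
          have key := IH2 h β d hm1β hβd (Or.inl (by simp))
            (Or.inl (by rw [heq]; simp)) (Or.inl (by rw [heq]; simp))
          rw [key]
          simp

end KnuthMain

section KnuthCore

open List

lemma knuth_core (N : ℕ) : ∀ (t : List (List ℕ)) (x y z : ℕ),
    t.flatten.length ≤ N → (∀ r ∈ t, r.Pairwise (· < ·)) →
    (x :: y :: z :: t.flatten).Nodup → x < y → y < z →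
    (insertTab (insertTab (insertTab t x) z) y = insertTab (insertTab (insertTab t z) x) y) ∧
    (insertTab (insertTab (insertTab t y) x) z = insertTab (insertTab (insertTab t y) z) x) := by
  induction N with
  | zero =>
    intro t x y z hlen hs hnd hxy hyz
    cases t with
    | nil => simpa [insertTab, insertRow] using knuth_nilrow [] hxy hyz
    | cons r rs =>
      have hr : r = [] := by
        cases r with
        | nil => rfl
        | cons a r' => simp at hlen
      subst hr
      exact knuth_nilrow rs hxy hyz
  | succ N IH =>
    intro t x y z hlen hs hnd hxy hyz
    cases t with
    | nil => simpa [insertTab, insertRow] using knuth_nilrow [] hxy hyz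
    | cons r rs =>
      cases r with
      | nil => exact knuth_nilrow rs hxy hyz
      | cons h rt =>
        have hsr : (h :: rt).Pairwise (· < ·) := hs _ (List.mem_cons_self)
        have hss : ∀ r ∈ rs, r.Pairwise (· < ·) := fun r hr => hs r (List.mem_cons_of_mem _ hr)
        rw [List.flatten_cons] at hnd hlen
        have hx0 : x ∉ y :: z :: ((h :: rt) ++ rs.flatten) := (List.nodup_cons.1 hnd).1
        have hnd1 := (List.nodup_cons.1 hnd).2
        have hy0 : y ∉ z :: ((h :: rt) ++ rs.flatten) := (List.nodup_cons.1 hnd1).1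
        have hnd2 := (List.nodup_cons.1 hnd1).2
        have hz0 : z ∉ (h :: rt) ++ rs.flatten := (List.nodup_cons.1 hnd2).1
        have hflat : ((h :: rt) ++ rs.flatten).Nodup := (List.nodup_cons.1 hnd2).2
        have hxr : x ∉ h :: rt := fun hm =>
          hx0 (List.mem_cons_of_mem _ (List.mem_cons_of_mem _ (List.mem_append_left _ hm)))
        have hyr : y ∉ h :: rt := fun hm =>
          hy0 (List.mem_cons_of_mem _ (List.mem_append_left _ hm))
        have hzr : z ∉ h :: rt := fun hm => hz0 (List.mem_append.2 (Or.inl hm))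
        have hxf : x ∉ rs.flatten := fun hm =>
          hx0 (List.mem_cons_of_mem _ (List.mem_cons_of_mem _ (List.mem_append_right _ hm)))
        have hyf : y ∉ rs.flatten := fun hm =>
          hy0 (List.mem_cons_of_mem _ (List.mem_append_right _ hm))
        have hzf : z ∉ rs.flatten := fun hm => hz0 (List.mem_append.2 (Or.inr hm))
        have hdisj : ∀ a ∈ h :: rt, a ∉ rs.flatten :=
          fun a ha hf => (List.disjoint_of_nodup_append hflat) ha hf
        have hfrs : rs.flatten.Nodup := (List.nodup_append.1 hflat).2.1
        rcases Nat.lt_or_ge x h with hxh | hge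
        · -- main case : all entries of the first row exceed x
          refine knuth_mainrow h rt rs x y z hsr hxy hyz hxh hyr hzr ?_ ?_
          · intro a b c hab hbc ha hb hc
            refine (IH rs a b c ?_ hss ?_ hab hbc).1
            · simp only [List.length_append, List.length_cons] at hlen; omega
            · refine nodup_cons3 hab hbc ?_ ?_ ?_ hfrs
              · rcases ha with ha | rfl | rfl
                · exact hdisj a ha
                · exact hyf
                · exact hzf
              · rcases hb with hb | rfl | rfl
                · exact hdisj b hb
                · exact hyf
                · exact hzf
              · rcases hc with hc | rfl | rfl
                · exact hdisj c hc
                · exact hyf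
                · exact hzf
          · intro a b c hab hbc ha hb hc
            refine (IH rs a b c ?_ hss ?_ hab hbc).2
            · simp only [List.length_append, List.length_cons] at hlen; omega
            · refine nodup_cons3 hab hbc ?_ ?_ ?_ hfrs
              · rcases ha with ha | rfl | rfl
                · exact hdisj a ha
                · exact hyf
                · exact hzf
              · rcases hb with hb | rfl | rfl
                · exact hdisj b hb
                · exact hyf
                · exact hzf
              · rcases hc with hc | rfl | rfl
                · exact hdisj c hc
                · exact hyf
                · exact hzf
        · -- peel case : h < x
          have hhx : h < x := by
            rcases Nat.lt_or_ge h x with h' | h'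
            · exact h'
            · exact absurd (Nat.le_antisymm hge h' ▸ (List.mem_cons_self (a := h) (l := rt))) hxr
          have hnx : ¬ x < h := Nat.lt_asymm hhx
          have hny : ¬ y < h := Nat.lt_asymm (hhx.trans hxy)
          have hnz : ¬ z < h := Nat.lt_asymm ((hhx.trans hxy).trans hyz)
          have hlen' : (rt :: rs).flatten.length ≤ N := by
            simp only [List.flatten_cons, List.length_append, List.length_cons] at hlen ⊢
            omega
          have hs' : ∀ r ∈ rt :: rs, r.Pairwise (· < ·) := by
            intro r hr
            rcases List.mem_cons.1 hr with rfl | hr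
            · exact hsr.of_cons
            · exact hss r hr
          have hsub : (x :: y :: z :: (rt :: rs).flatten) <+
              (x :: y :: z :: ((h :: rt) ++ rs.flatten)) := by
            refine List.Sublist.cons₂ _ (List.Sublist.cons₂ _ (List.Sublist.cons₂ _ ?_))
            rw [List.flatten_cons, List.cons_append]
            exact List.sublist_cons_self _ _
          have hnd' := List.Nodup.sublist hsub hnd
          obtain ⟨m1, m2⟩ := IH (rt :: rs) x y z hlen' hs' hnd' hxy hyz
          constructor
          · rw [insertTab_consHead hnx rt rs, insertTab_consHead hnz rt rs,
              insertTab_consHead' hnz (insertTab_ne_nil _ _),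
              insertTab_consHead' hnx (insertTab_ne_nil _ _),
              insertTab_consHead' hny (insertTab_ne_nil _ _),
              insertTab_consHead' hny (insertTab_ne_nil _ _), m1]
          · rw [insertTab_consHead hny rt rs,
              insertTab_consHead' hnx (insertTab_ne_nil _ _),
              insertTab_consHead' hnz (insertTab_ne_nil _ _),
              insertTab_consHead' hnz (insertTab_ne_nil _ _),
              insertTab_consHead' hnx (insertTab_ne_nil _ _), m2]

end KnuthCore

section Plactic

open List

/-- Elementary Knuth moves. -/
inductive KStep : List ℕ → List ℕ → Prop
  | k1 (p q : List ℕ) {x y z : ℕ} (h1 : x ≤ y) (h2 : y < z) :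
      KStep (p ++ x :: z :: y :: q) (p ++ z :: x :: y :: q)
  | k2 (p q : List ℕ) {x y z : ℕ} (h1 : x < y) (h2 : y ≤ z) :
      KStep (p ++ y :: x :: z :: q) (p ++ y :: z :: x :: q)

/-- Knuth equivalence. -/
def KEq (u v : List ℕ) : Prop :=
  Relation.ReflTransGen (fun a b => KStep a b ∨ KStep b a) u v

lemma KEq.refl' {u : List ℕ} : KEq u u := Relation.ReflTransGen.refl

lemma KEq.trans' {u v w : List ℕ} (h1 : KEq u v) (h2 : KEq v w) : KEq u w :=
  Relation.ReflTransGen.trans h1 h2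

lemma KEq.symm' {u v : List ℕ} (h : KEq u v) : KEq v u :=
  by haveI : Std.Symm (fun a b : List ℕ => KStep a b ∨ KStep b a) := ⟨fun _ _ hs => hs.symm⟩
     exact @Std.Symm.symm _ (Relation.ReflTransGen (fun a b : List ℕ => KStep a b ∨ KStep b a)) _ _ _ h

lemma KEq.of_eq {u v : List ℕ} (h : u = v) : KEq u v := h ▸ KEq.refl'

lemma KStep.keq {u v : List ℕ} (h : KStep u v) : KEq u v :=
  Relation.ReflTransGen.single (Or.inl h)

lemma KStep.keq_rev {u v : List ℕ} (h : KStep v u) : KEq u v :=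
  Relation.ReflTransGen.single (Or.inr h)

lemma KStep.perm {u v : List ℕ} (h : KStep u v) : u.Perm v := by
  cases h with
  | k1 p q h1 h2 => exact List.Perm.append_left p (List.Perm.swap _ _ _)
  | k2 p q h1 h2 => exact List.Perm.append_left p (List.Perm.cons _ (List.Perm.swap _ _ _))

lemma KEq.perm {u v : List ℕ} (h : KEq u v) : u.Perm v := by
  induction h with
  | refl => exact List.Perm.refl _
  | tail _ hst ih =>
    rcases hst with hst | hst
    · exact ih.trans hst.perm
    · exact ih.trans hst.perm.symm

lemma KStep.context {u v : List ℕ} (h : KStep u v) (a b : List ℕ) :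
    KStep (a ++ u ++ b) (a ++ v ++ b) := by
  cases h with
  | k1 p q h1 h2 => simpa using KStep.k1 (a ++ p) (q ++ b) h1 h2
  | k2 p q h1 h2 => simpa using KStep.k2 (a ++ p) (q ++ b) h1 h2

lemma KEq.context {u v : List ℕ} (h : KEq u v) (a b : List ℕ) :
    KEq (a ++ u ++ b) (a ++ v ++ b) := by
  induction h with
  | refl => exact KEq.refl'
  | tail _ hst ih =>
    rcases hst with hst | hst
    · exact ih.trans' (hst.context a b).keq
    · exact ih.trans' (hst.context a b).keq_rev

lemma KEq.append_right {u v : List ℕ} (h : KEq u v) (b : List ℕ) :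
    KEq (u ++ b) (v ++ b) := by
  simpa using h.context [] b

lemma KEq.append_left {u v : List ℕ} (h : KEq u v) (a : List ℕ) :
    KEq (a ++ u) (a ++ v) := by
  simpa using h.context a []

/-- move the last letter `w` of a row leftwards past the tail `b`. -/
lemma kEq_S1 : ∀ (b u : List ℕ) (v w : ℕ), w < v → (∀ e ∈ b, v < e) →
    b.Pairwise (· < ·) → KEq (u ++ v :: (b ++ [w])) (u ++ v :: w :: b) := by
  intro b
  induction b with
  | nil => intro u v w _ _ _; simp; exact KEq.refl'
  | cons e b' ih =>
    intro u v w hwv hb hs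
    have hve : v < e := hb e (by simp)
    have hb' : ∀ f ∈ b', e < f := by
      have := hs; rw [List.pairwise_cons] at this; exact this.1
    have ih' := ih (u ++ [v]) e w (hwv.trans hve) hb' hs.of_cons
    have c1 : (u ++ [v]) ++ e :: (b' ++ [w]) = u ++ v :: ((e :: b') ++ [w]) := by simp
    have c2 : (u ++ [v]) ++ e :: w :: b' = u ++ v :: e :: w :: b' := by simp
    rw [c1, c2] at ih'
    have st : KStep (u ++ v :: w :: e :: b') (u ++ v :: e :: w :: b') :=
      KStep.k2 u b' hwv hve.le
    exact ih'.trans' st.keq_rev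

/-- move the bumped letter `c` leftwards past the prefix `m`. -/
lemma kEq_S2 : ∀ (m u : List ℕ) (c w : ℕ) (b : List ℕ), (∀ e ∈ m, e ≤ w) → w < c →
    m.Pairwise (· < ·) → KEq (u ++ m ++ c :: w :: b) (u ++ c :: (m ++ w :: b)) := by
  intro m
  induction m using List.reverseRecOn with
  | nil => intro u c w b _ _ _; simp; exact KEq.refl'
  | append_singleton m' e ih =>
    intro u c w b hm hwc hs
    obtain ⟨hsm', _, hm'e, _, _⟩ := sorted_decomp hs
    have hew : e ≤ w := hm e (by simp)
    have st : KStep ((u ++ m') ++ e :: c :: w :: b) ((u ++ m') ++ c :: e :: w :: b) :=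
      KStep.k1 (u ++ m') b hew hwc
    have ih' := ih u c e (w :: b) (fun f hf => (hm'e f hf).le) (hew.trans_lt hwc) hsm'
    have c0 : u ++ (m' ++ [e]) ++ c :: w :: b = (u ++ m') ++ e :: c :: w :: b := by simp
    have c1 : (u ++ m') ++ c :: e :: w :: b = u ++ m' ++ c :: e :: w :: b := by simp
    have c2 : u ++ c :: (m' ++ e :: w :: b) = u ++ c :: ((m' ++ [e]) ++ w :: b) := by simp
    rw [c0]
    rw [c1] at st
    rw [c2] at ih'
    exact (st.keq.trans' ih')

end Plactic

section RSKFacts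

open List

lemma insertRow_all_le {r : List ℕ} {x : ℕ} (h : ∀ e ∈ r, e ≤ x) :
    insertRow r x = (r ++ [x], none) := by
  induction r with
  | nil => rfl
  | cons a r ih =>
    have ha : ¬ x < a := Nat.not_lt.2 (h a (by simp))
    simp [insertRow, ha, ih (fun e he => h e (by simp [he]))]

lemma insertRow_bump_le {m b : List ℕ} {x c : ℕ} (hm : ∀ e ∈ m, e ≤ x) (hc : x < c) :
    insertRow (m ++ c :: b) x = (m ++ x :: b, some c) := by
  induction m with
  | nil => simp [insertRow, hc]
  | cons a m ih =>
    have ha : ¬ x < a := Nat.not_lt.2 (hm a (by simp))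
    simp [insertRow, ha, ih (fun e he => hm e (by simp [he]))]

lemma row_split_le (r : List ℕ) (x : ℕ) :
    (∀ e ∈ r, e ≤ x) ∨ ∃ m c b, r = m ++ c :: b ∧ (∀ e ∈ m, e ≤ x) ∧ x < c := by
  induction r with
  | nil => exact Or.inl (by simp)
  | cons a r ih =>
    rcases Nat.lt_or_ge x a with hax | hax
    · exact Or.inr ⟨[], a, r, by simp, by simp, hax⟩
    · rcases ih with h | ⟨m, c, b, rfl, hm, hc⟩
      · exact Or.inl (by simpa [hax] using h)
      · exact Or.inr ⟨a :: m, c, b, by simp, by simpa [hax] using hm, hc⟩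

lemma readWord_cons (r : List ℕ) (rs : List (List ℕ)) :
    readWord (r :: rs) = readWord rs ++ r := by
  simp [readWord]

lemma kEq_insert : ∀ (t : List (List ℕ)) (x : ℕ), (∀ r ∈ t, r.Pairwise (· < ·)) →
    KEq (readWord t ++ [x]) (readWord (insertTab t x)) := by
  intro t
  induction t with
  | nil => intro x _; simp [insertTab, readWord]; exact KEq.refl'
  | cons r rs ih =>
    intro x hst
    have hsr : r.Pairwise (· < ·) := hst r (List.mem_cons_self)
    have hss : ∀ r' ∈ rs, r'.Pairwise (· < ·) := fun r' hr' => hst r' (List.mem_cons_of_mem _ hr')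
    rcases row_split_le r x with hall | ⟨m, c, b, heq, hm, hc⟩
    · rw [insertTab_of_none (insertRow_all_le hall), readWord_cons, readWord_cons]
      exact KEq.of_eq (by simp)
    · subst heq
      obtain ⟨hsm, hsb, hmc, hcb, hmb⟩ := sorted_decomp hsr
      rw [insertTab_of_some (insertRow_bump_le hm hc), readWord_cons, readWord_cons]
      have s1 := kEq_S1 b (readWord rs ++ m) c x hc hcb hsb
      have s2 := kEq_S2 m (readWord rs) c x b hm hc hsm
      have ihc := (ih c hss).append_right (m ++ x :: b)
      refine ((KEq.of_eq ?_).trans' s1).trans'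
        (((KEq.of_eq ?_).trans' s2).trans' (((KEq.of_eq ?_).trans' ihc).trans' (KEq.of_eq ?_)))
      · simp
      · simp
      · simp
      · simp

lemma insertTab_invariants : ∀ (t : List (List ℕ)) (x : ℕ),
    (∀ r ∈ t, r.Pairwise (· < ·)) → t.flatten.Nodup → x ∉ t.flatten →
    (∀ r ∈ insertTab t x, r.Pairwise (· < ·)) ∧ (insertTab t x).flatten.Perm (x :: t.flatten) := by
  intro t
  induction t with
  | nil =>
    intro x _ _ _
    constructor
    · intro r hr
      simp [insertTab] at hr
      subst hr; simp
    · simp [insertTab]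
  | cons r rs ih =>
    intro x hst hnd hx
    rw [List.flatten_cons] at hnd hx ⊢
    have hsr : r.Pairwise (· < ·) := hst r (List.mem_cons_self)
    have hss : ∀ r' ∈ rs, r'.Pairwise (· < ·) := fun r' hr' => hst r' (List.mem_cons_of_mem _ hr')
    have hxr : x ∉ r := fun hm => hx (List.mem_append_left _ hm)
    have hxf : x ∉ rs.flatten := fun hm => hx (List.mem_append_right _ hm)
    have hfrs : rs.flatten.Nodup := (List.nodup_append.1 hnd).2.1
    have hdisj : ∀ a ∈ r, a ∉ rs.flatten :=
      fun a ha hf => (List.disjoint_of_nodup_append hnd) ha hf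
    rcases row_split hsr hxr with hall | ⟨m, c, b, heq, hm, hc⟩
    · rw [insertTab_of_none (insertRow_all_lt hall)]
      constructor
      · intro r' hr'
        rcases List.mem_cons.1 hr' with rfl | hr'
        · rw [List.pairwise_append]
          exact ⟨hsr, by simp, fun a ha b hb => by simp at hb; subst hb; exact hall a ha⟩
        · exact hss r' hr'
      · rw [List.flatten_cons]
        have : (r ++ [x]) ++ rs.flatten = r ++ x :: rs.flatten := by simp
        rw [this]
        exact List.perm_middle
    · subst heq
      obtain ⟨hsm, hsb, hmc, hcb, hmb⟩ := sorted_decomp hsr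
      rw [insertTab_of_some (insertRow_bump hm hc)]
      have hcm : c ∈ m ++ c :: b := by simp
      obtain ⟨ih1, ih2⟩ := ih c hss hfrs (hdisj c hcm)
      constructor
      · intro r' hr'
        rcases List.mem_cons.1 hr' with rfl | hr'
        · rw [List.pairwise_append]
          refine ⟨hsm, ?_, ?_⟩
          · rw [List.pairwise_cons]
            exact ⟨fun f hf => hc.trans (hcb f hf), hsb⟩
          · intro a ha f hf
            rcases List.mem_cons.1 hf with rfl | hf
            · exact hm a ha
            · exact hmb a ha f hf
        · exact ih1 r' hr'
      · rw [List.flatten_cons]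
        refine (List.Perm.append_left _ ih2).trans ?_
        have h1 : (m ++ x :: b) ++ c :: rs.flatten = m ++ x :: (b ++ c :: rs.flatten) := by
          simp
        have h2 : x :: ((m ++ c :: b) ++ rs.flatten) = x :: (m ++ c :: (b ++ rs.flatten)) := by
          simp
        rw [h1, h2]
        have inner : m ++ (b ++ c :: rs.flatten) ~ c :: (m ++ (b ++ rs.flatten)) := by
          have e1 : m ++ (b ++ c :: rs.flatten) = (m ++ b) ++ c :: rs.flatten := by simp
          have e2 : c :: (m ++ (b ++ rs.flatten)) = c :: ((m ++ b) ++ rs.flatten) := by simp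
          rw [e1, e2]
          exact List.perm_middle
        calc m ++ x :: (b ++ c :: rs.flatten)
            ~ x :: (m ++ (b ++ c :: rs.flatten)) := List.perm_middle
          _ ~ x :: (c :: (m ++ (b ++ rs.flatten))) := List.Perm.cons x inner
          _ ~ x :: (m ++ c :: (b ++ rs.flatten)) := List.Perm.cons x List.perm_middle.symm

end RSKFacts

section RSKKnuth

open List

lemma RSK_append (l L : List ℕ) : RSK (l ++ L) = List.foldl insertTab (RSK l) L := by
  simp [RSK, List.foldl_append]

lemma RSK_invariants : ∀ (w : List ℕ), w.Nodup →
    (∀ r ∈ RSK w, r.Pairwise (· < ·)) ∧ (RSK w).flatten.Perm w := by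
  intro w
  induction w using List.reverseRecOn with
  | nil => intro _; constructor <;> simp [RSK]
  | append_singleton w' a ih =>
    intro hw
    have hsub : w' <+ w' ++ [a] := List.sublist_append_left _ _
    have hw' : w'.Nodup := List.Nodup.sublist hsub hw
    have ha : a ∉ w' := by
      intro hm
      have : ¬ (w' ++ [a]).Nodup := by
        simp [List.nodup_append, hm]
      exact this hw
    obtain ⟨ih1, ih2⟩ := ih hw'
    have hfl : (RSK w').flatten.Nodup := (ih2.nodup_iff).2 hw'
    have haf : a ∉ (RSK w').flatten := fun hm => ha (ih2.mem_iff.1 hm)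
    obtain ⟨j1, j2⟩ := insertTab_invariants (RSK w') a ih1 hfl haf
    rw [RSK_append]
    constructor
    · simpa using j1
    · have j2' : (List.foldl insertTab (RSK w') [a]).flatten.Perm (a :: (RSK w').flatten) := by
        simpa using j2
      have step : (a :: w' : List ℕ).Perm (w' ++ [a]) := by
        simpa using (List.perm_middle (a := a) (l₁ := w') (l₂ := ([] : List ℕ))).symm
      exact j2'.trans ((ih2.cons a).trans step)

lemma RSK_eq_of_kstep {u v : List ℕ} (h : KStep u v) (hu : u.Nodup) : RSK u = RSK v := by
  cases h with
  | @k1 p q x y z h1 h2 =>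
    have hsub : (x :: z :: y :: q) <+ p ++ x :: z :: y :: q := List.sublist_append_right _ _
    have hnd3 := List.Nodup.sublist hsub hu
    have hxy : x < y := by
      rcases Nat.lt_or_ge x y with h' | h'
      · exact h'
      · have : x = y := Nat.le_antisymm h1 h'
        subst this
        simp [List.nodup_cons] at hnd3
    have hp : p.Nodup := List.Nodup.sublist (List.sublist_append_left _ _) hu
    obtain ⟨hsort, hperm⟩ := RSK_invariants p hp
    have hdisj : ∀ e ∈ x :: z :: y :: q, e ∉ (RSK p).flatten := by
      intro e he hf
      have : e ∈ p := hperm.mem_iff.1 hf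
      exact (List.disjoint_of_nodup_append hu) this he
    have hnd' : (x :: y :: z :: (RSK p).flatten).Nodup := by
      refine nodup_cons3 hxy h2 ?_ ?_ ?_ (hperm.nodup_iff.2 hp)
      · exact hdisj x (by simp)
      · exact hdisj y (by simp)
      · exact hdisj z (by simp)
    have key := (knuth_core (RSK p).flatten.length (RSK p) x y z le_rfl hsort hnd' hxy h2).1
    rw [RSK_append, RSK_append]
    simp only [List.foldl_cons]
    rw [key]
  | @k2 p q x y z h1 h2 =>
    have hsub : (y :: x :: z :: q) <+ p ++ y :: x :: z :: q := List.sublist_append_right _ _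
    have hnd3 := List.Nodup.sublist hsub hu
    have hyz : y < z := by
      rcases Nat.lt_or_ge y z with h' | h'
      · exact h'
      · have : y = z := Nat.le_antisymm h2 h'
        subst this
        simp [List.nodup_cons] at hnd3
    have hp : p.Nodup := List.Nodup.sublist (List.sublist_append_left _ _) hu
    obtain ⟨hsort, hperm⟩ := RSK_invariants p hp
    have hdisj : ∀ e ∈ y :: x :: z :: q, e ∉ (RSK p).flatten := by
      intro e he hf
      have : e ∈ p := hperm.mem_iff.1 hf
      exact (List.disjoint_of_nodup_append hu) this he
    have hnd' : (x :: y :: z :: (RSK p).flatten).Nodup := by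
      refine nodup_cons3 h1 hyz ?_ ?_ ?_ (hperm.nodup_iff.2 hp)
      · exact hdisj x (by simp)
      · exact hdisj y (by simp)
      · exact hdisj z (by simp)
    have key := (knuth_core (RSK p).flatten.length (RSK p) x y z le_rfl hsort hnd' h1 hyz).2
    rw [RSK_append, RSK_append]
    simp only [List.foldl_cons]
    rw [key]

lemma RSK_eq_of_kEq {u v : List ℕ} (h : KEq u v) (hu : u.Nodup) : RSK u = RSK v := by
  induction h with
  | refl => rfl
  | @tail b c hub hst ih =>
    have hb : b.Nodup := (KEq.perm hub).nodup_iff.1 hu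
    rcases hst with hst | hst
    · exact ih.trans (RSK_eq_of_kstep hst hb)
    · have hc : c.Nodup := hst.perm.symm.nodup_iff.1 hb
      exact ih.trans (RSK_eq_of_kstep hst hc).symm

lemma kEq_word_RSK : ∀ (w : List ℕ), w.Nodup → KEq w (readWord (RSK w)) := by
  intro w
  induction w using List.reverseRecOn with
  | nil => intro _; simp [RSK, readWord]; exact KEq.refl'
  | append_singleton w' a ih =>
    intro hw
    have hw' : w'.Nodup := List.Nodup.sublist (List.sublist_append_left _ _) hw
    have h1 : KEq (w' ++ [a]) (readWord (RSK w') ++ [a]) := (ih hw').append_right [a]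
    have h2 := kEq_insert (RSK w') a (RSK_invariants w' hw').1
    rw [RSK_append]
    simp only [List.foldl_cons, List.foldl_nil]
    exact h1.trans' h2

end RSKKnuth

section Restr

open List

lemma restr_append (u v : List ℕ) (i j : ℕ) :
    restr (u ++ v) i j = restr u i j ++ restr v i j := by
  simp [restr]

lemma restr_cons_mem {i j a : ℕ} (h1 : i ≤ a) (h2 : a ≤ j) (w : List ℕ) :
    restr (a :: w) i j = (a - (i - 1)) :: restr w i j := by
  simp [restr, List.filter_cons, h1, h2]

lemma restr_cons_notmem {i j a : ℕ} (h : ¬ (i ≤ a ∧ a ≤ j)) (w : List ℕ) :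
    restr (a :: w) i j = restr w i j := by
  simp only [restr, List.filter_cons]
  rw [if_neg (by simpa using h)]

lemma KStep.restr_or {u v : List ℕ} (h : KStep u v) (i j : ℕ) :
    restr u i j = restr v i j ∨ KStep (restr u i j) (restr v i j) := by
  cases h with
  | @k1 p q x y z h1 h2 =>
    rw [show p ++ x :: z :: y :: q = p ++ (x :: z :: y :: []) ++ q by simp,
        show p ++ z :: x :: y :: q = p ++ (z :: x :: y :: []) ++ q by simp,
        restr_append, restr_append, restr_append, restr_append]
    by_cases hx : i ≤ x ∧ x ≤ j
    · by_cases hz : i ≤ z ∧ z ≤ j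
      · have hy : i ≤ y ∧ y ≤ j := ⟨le_trans hx.1 h1, le_trans h2.le hz.2⟩
        right
        rw [restr_cons_mem hx.1 hx.2, restr_cons_mem hz.1 hz.2, restr_cons_mem hy.1 hy.2,
          restr_cons_mem hz.1 hz.2, restr_cons_mem hx.1 hx.2, restr_cons_mem hy.1 hy.2]
        have e1 : x - (i-1) ≤ y - (i-1) := Nat.sub_le_sub_right h1 _
        have e2 : y - (i-1) < z - (i-1) := by
          have := hx.1; have := h1; omega
        simpa [show restr [] i j = [] from rfl] using KStep.k1 (restr p i j) (restr q i j) e1 e2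
      · left
        by_cases hy : i ≤ y ∧ y ≤ j
        · rw [restr_cons_mem hx.1 hx.2, restr_cons_notmem hz, restr_cons_mem hy.1 hy.2,
            restr_cons_notmem hz, restr_cons_mem hx.1 hx.2, restr_cons_mem hy.1 hy.2]
        · rw [restr_cons_mem hx.1 hx.2, restr_cons_notmem hz, restr_cons_notmem hy,
            restr_cons_notmem hz, restr_cons_mem hx.1 hx.2, restr_cons_notmem hy]
    · left
      by_cases hz : i ≤ z ∧ z ≤ j
      · by_cases hy : i ≤ y ∧ y ≤ j
        · rw [restr_cons_notmem hx, restr_cons_mem hz.1 hz.2, restr_cons_mem hy.1 hy.2,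
            restr_cons_mem hz.1 hz.2, restr_cons_notmem hx, restr_cons_mem hy.1 hy.2]
        · rw [restr_cons_notmem hx, restr_cons_mem hz.1 hz.2, restr_cons_notmem hy,
            restr_cons_mem hz.1 hz.2, restr_cons_notmem hx, restr_cons_notmem hy]
      · by_cases hy : i ≤ y ∧ y ≤ j
        · rw [restr_cons_notmem hx, restr_cons_notmem hz, restr_cons_mem hy.1 hy.2,
            restr_cons_notmem hz, restr_cons_notmem hx, restr_cons_mem hy.1 hy.2]
        · rw [restr_cons_notmem hx, restr_cons_notmem hz, restr_cons_notmem hy,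
            restr_cons_notmem hz, restr_cons_notmem hx, restr_cons_notmem hy]
  | @k2 p q x y z h1 h2 =>
    rw [show p ++ y :: x :: z :: q = p ++ (y :: x :: z :: []) ++ q by simp,
        show p ++ y :: z :: x :: q = p ++ (y :: z :: x :: []) ++ q by simp,
        restr_append, restr_append, restr_append, restr_append]
    by_cases hx : i ≤ x ∧ x ≤ j
    · by_cases hz : i ≤ z ∧ z ≤ j
      · have hy : i ≤ y ∧ y ≤ j := ⟨le_trans hx.1 h1.le, le_trans h2 hz.2⟩
        right
        rw [restr_cons_mem hy.1 hy.2, restr_cons_mem hx.1 hx.2, restr_cons_mem hz.1 hz.2,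
          restr_cons_mem hy.1 hy.2, restr_cons_mem hz.1 hz.2, restr_cons_mem hx.1 hx.2]
        have e1 : x - (i-1) < y - (i-1) := by
          have := hx.1; omega
        have e2 : y - (i-1) ≤ z - (i-1) := Nat.sub_le_sub_right h2 _
        simpa [show restr [] i j = [] from rfl] using KStep.k2 (restr p i j) (restr q i j) e1 e2
      · left
        by_cases hy : i ≤ y ∧ y ≤ j
        · rw [restr_cons_mem hy.1 hy.2, restr_cons_mem hx.1 hx.2, restr_cons_notmem hz,
            restr_cons_mem hy.1 hy.2, restr_cons_notmem hz, restr_cons_mem hx.1 hx.2]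
        · rw [restr_cons_notmem hy, restr_cons_mem hx.1 hx.2, restr_cons_notmem hz,
            restr_cons_notmem hy, restr_cons_notmem hz, restr_cons_mem hx.1 hx.2]
    · left
      by_cases hz : i ≤ z ∧ z ≤ j
      · by_cases hy : i ≤ y ∧ y ≤ j
        · rw [restr_cons_mem hy.1 hy.2, restr_cons_notmem hx, restr_cons_mem hz.1 hz.2,
            restr_cons_mem hy.1 hy.2, restr_cons_mem hz.1 hz.2, restr_cons_notmem hx]
        · rw [restr_cons_notmem hy, restr_cons_notmem hx, restr_cons_mem hz.1 hz.2,
            restr_cons_notmem hy, restr_cons_mem hz.1 hz.2, restr_cons_notmem hx]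
      · by_cases hy : i ≤ y ∧ y ≤ j
        · rw [restr_cons_mem hy.1 hy.2, restr_cons_notmem hx, restr_cons_notmem hz,
            restr_cons_mem hy.1 hy.2, restr_cons_notmem hz, restr_cons_notmem hx]
        · rw [restr_cons_notmem hy, restr_cons_notmem hx, restr_cons_notmem hz,
            restr_cons_notmem hy, restr_cons_notmem hz, restr_cons_notmem hx]

lemma KEq.restr {u v : List ℕ} (h : KEq u v) (i j : ℕ) :
    KEq (restr u i j) (restr v i j) := by
  induction h with
  | refl => exact KEq.refl'
  | tail _ hst ih =>
    rcases hst with hst | hst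
    · rcases hst.restr_or i j with he | hs
      · exact ih.trans' (KEq.of_eq he)
      · exact ih.trans' hs.keq
    · rcases hst.restr_or i j with he | hs
      · exact ih.trans' (KEq.of_eq he.symm)
      · exact ih.trans' hs.keq_rev

lemma restr_nodup {w : List ℕ} (i j : ℕ) (hw : w.Nodup) : (restr w i j).Nodup := by
  refine List.Nodup.map_on ?_ (hw.filter _)
  intro a ha b hb hab
  simp only [List.mem_filter, decide_eq_true_eq] at ha hb
  omega

end Restr

section Inversions

open List

lemma idx_lt_of_sublist : ∀ {l : List ℕ} {a b : ℕ}, [a, b] <+ l → l.Nodup → a ≠ b →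
    l.idxOf a < l.idxOf b := by
  intro l
  induction l with
  | nil => intro a b h _ _; simp at h
  | cons c l ih =>
    intro a b h hnd hab
    have hcl : c ∉ l := (List.nodup_cons.1 hnd).1
    cases h with
    | cons _ h' =>
      have ha : a ∈ l := h'.subset (by simp)
      have hb : b ∈ l := h'.subset (by simp)
      have hac : c ≠ a := fun he => hcl (he ▸ ha)
      have hbc : c ≠ b := fun he => hcl (he ▸ hb)
      rw [List.idxOf_cons_ne _ hac, List.idxOf_cons_ne _ hbc]
      exact Nat.succ_lt_succ (ih h' (List.nodup_cons.1 hnd).2 hab)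
    | cons_cons _ h' =>
      rw [List.idxOf_cons_self, List.idxOf_cons_ne _ hab]
      exact Nat.succ_pos _

lemma sublist_of_idx_lt : ∀ {l : List ℕ} {a b : ℕ}, a ∈ l → b ∈ l →
    l.idxOf a < l.idxOf b → [a, b] <+ l := by
  intro l
  induction l with
  | nil => intro a b h; simp at h
  | cons c l ih =>
    intro a b ha hb h
    by_cases hac : a = c
    · subst hac
      have hba : b ≠ a := by
        intro he
        subst he
        simp at h
      have hbl : b ∈ l := by
        rcases List.mem_cons.1 hb with rfl | hbl
        · exact absurd rfl hba
        · exact hbl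
      exact List.Sublist.cons₂ a (List.singleton_sublist.2 hbl)
    · have hbc : b ≠ c := by
        intro he
        subst he
        rw [List.idxOf_cons_self] at h
        exact Nat.not_lt_zero _ h
      have hal : a ∈ l := by
        rcases List.mem_cons.1 ha with rfl | hal
        · exact absurd rfl hac
        · exact hal
      have hbl : b ∈ l := by
        rcases List.mem_cons.1 hb with rfl | hbl
        · exact absurd rfl hbc
        · exact hbl
      rw [List.idxOf_cons_ne _ (Ne.symm hac), List.idxOf_cons_ne _ (Ne.symm hbc)] at h
      exact List.Sublist.cons _ (ih hal hbl (Nat.lt_of_succ_lt_succ h))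

lemma mem_restr_of {w : List ℕ} {i j A : ℕ} (hA : A ∈ w) (h1 : i ≤ A) (h2 : A ≤ j) :
    A - (i - 1) ∈ restr w i j := by
  simp only [restr, List.mem_map, List.mem_filter, decide_eq_true_eq]
  exact ⟨A, ⟨hA, h1, h2⟩, rfl⟩

lemma mem_restr_iff {w : List ℕ} {i j a : ℕ} (hi : 1 ≤ i) :
    a ∈ restr w i j ↔ (1 ≤ a ∧ a + (i - 1) ∈ w ∧ a + (i - 1) ≤ j) := by
  simp only [restr, List.mem_map, List.mem_filter, decide_eq_true_eq]
  constructor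
  · rintro ⟨A, ⟨hA, hiA, hAj⟩, rfl⟩
    refine ⟨by omega, ?_, by omega⟩
    have : A - (i - 1) + (i - 1) = A := by omega
    rw [this]
    exact hA
  · rintro ⟨h1, h2, h3⟩
    exact ⟨a + (i - 1), ⟨h2, by omega, h3⟩, by omega⟩

lemma restr_pair_sublist {w : List ℕ} {i j A B : ℕ} (h : [A, B] <+ w)
    (hA : i ≤ A ∧ A ≤ j) (hB : i ≤ B ∧ B ≤ j) :
    [A - (i - 1), B - (i - 1)] <+ restr w i j := by
  have h1 := List.Sublist.filter (fun x => decide (i ≤ x ∧ x ≤ j)) h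
  have e : List.filter (fun x => decide (i ≤ x ∧ x ≤ j)) [A, B] = [A, B] := by
    rw [List.filter_eq_self]
    intro a ha
    simp only [List.mem_cons, List.not_mem_nil, or_false] at ha
    rcases ha with rfl | rfl <;> simp [hA.1, hA.2, hB.1, hB.2]
  rw [e] at h1
  have h2 := List.Sublist.map (fun x => x - (i - 1)) h1
  simpa [restr] using h2

lemma idx_restr_lt {w : List ℕ} {i j A B : ℕ} (hw : w.Nodup)
    (hA : A ∈ w) (hB : B ∈ w) (hAB : A ≠ B) (hAr : i ≤ A ∧ A ≤ j) (hBr : i ≤ B ∧ B ≤ j)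
    (h : w.idxOf A < w.idxOf B) :
    (restr w i j).idxOf (A - (i - 1)) < (restr w i j).idxOf (B - (i - 1)) := by
  have hsub := restr_pair_sublist (sublist_of_idx_lt hA hB h) hAr hBr
  refine idx_lt_of_sublist hsub (restr_nodup i j hw) ?_
  have := hAr.1
  have := hBr.1
  omega

lemma wordLE_restr {σ τ : List ℕ} (hσ : σ.Nodup) (hτ : τ.Nodup) (i j : ℕ) (hi : 1 ≤ i)
    (hle : wordLE σ τ) : wordLE (restr σ i j) (restr τ i j) := by
  rintro ⟨a, b⟩ ⟨hab, ha, hb, hidx⟩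
  simp only at hab ha hb hidx
  rw [mem_restr_iff hi] at ha hb
  obtain ⟨ha1, haσ, haj⟩ := ha
  obtain ⟨hb1, hbσ, hbj⟩ := hb
  set A := a + (i - 1) with hA
  set B := b + (i - 1) with hB
  have hABne : A ≠ B := by omega
  have haA : a = A - (i - 1) := by omega
  have hbB : b = B - (i - 1) := by omega
  have hiA : i ≤ A ∧ A ≤ j := ⟨by omega, haj⟩
  have hiB : i ≤ B ∧ B ≤ j := ⟨by omega, hbj⟩
  -- transfer the inversion from restr σ back to σ
  have hidxσ : σ.idxOf B < σ.idxOf A := by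
    rcases Nat.lt_trichotomy (σ.idxOf B) (σ.idxOf A) with h' | h' | h'
    · exact h'
    · exact absurd ((List.idxOf_inj hbσ).1 h') (Ne.symm hABne)
    · exfalso
      have := idx_restr_lt hσ haσ hbσ hABne hiA hiB h'
      rw [← haA, ← hbB] at this
      omega
  have hmem : (A, B) ∈ InvL σ := ⟨by simp; omega, haσ, hbσ, hidxσ⟩
  have hmem' := hle hmem
  obtain ⟨hABlt, hAτ, hBτ, hidxτ⟩ := hmem'
  refine ⟨hab, ?_, ?_, ?_⟩
  · rw [haA]; exact mem_restr_of hAτ hiA.1 hiA.2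
  · rw [hbB]; exact mem_restr_of hBτ hiB.1 hiB.2
  · have := idx_restr_lt hτ hBτ hAτ (Ne.symm hABne) hiB hiA hidxτ
    rw [← haA, ← hbB] at this
    exact this

end Inversions

section Assembly

open List

lemma restr_range' {n i j : ℕ} (hi : 1 ≤ i) (hij : i ≤ j) (hj : j ≤ n) :
    restr (List.range' 1 n) i j = List.range' 1 (j - i + 1) := by
  have e1 : List.range' 1 (i-1) ++ List.range' i (j-i+1) = List.range' 1 ((j-i+1) + (i-1)) := by
    have h := List.range'_append (s := 1) (m := i-1) (n := j-i+1) (step := 1)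
    rw [show 1 + 1*(i-1) = i by omega] at h
    rwa [Nat.add_comm (i - 1)] at h
  have e2 : List.range' 1 ((j-i+1)+(i-1)) ++ List.range' (j+1) (n-j) = List.range' 1 n := by
    have h := List.range'_append (s := 1) (m := (j-i+1)+(i-1)) (n := n-j) (step := 1)
    rw [show 1 + 1*((j-i+1)+(i-1)) = j+1 by omega, show ((j-i+1)+(i-1)) + (n-j) = n by omega]
      at h
    exact h
  have hsplit : List.range' 1 (i-1) ++ List.range' i (j-i+1) ++ List.range' (j+1) (n-j)
      = List.range' 1 n := by
    rw [e1, e2]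
  rw [← hsplit, restr_append, restr_append]
  have r1 : restr (List.range' 1 (i-1)) i j = [] := by
    have : List.filter (fun x => decide (i ≤ x ∧ x ≤ j)) (List.range' 1 (i-1)) = [] := by
      rw [List.filter_eq_nil_iff]
      intro a ha
      rw [List.mem_range'_1] at ha
      simp only [decide_eq_true_eq]
      omega
    simp only [restr]
    rw [this]
    rfl
  have r3 : restr (List.range' (j+1) (n-j)) i j = [] := by
    have : List.filter (fun x => decide (i ≤ x ∧ x ≤ j)) (List.range' (j+1) (n-j)) = [] := by
      rw [List.filter_eq_nil_iff]
      intro a ha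
      rw [List.mem_range'_1] at ha
      simp only [decide_eq_true_eq]
      omega
    simp only [restr]
    rw [this]
    rfl
  have r2 : restr (List.range' i (j-i+1)) i j = List.range' 1 (j-i+1) := by
    have hf : List.filter (fun x => decide (i ≤ x ∧ x ≤ j)) (List.range' i (j-i+1))
        = List.range' i (j-i+1) := by
      rw [List.filter_eq_self]
      intro a ha
      rw [List.mem_range'_1] at ha
      simp only [decide_eq_true_eq]
      omega
    rw [restr, hf, List.range'_eq_map_range, List.map_map, List.range'_eq_map_range]
    refine List.map_congr_left ?_
    intro a _
    simp only [Function.comp_apply]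
    omega
  rw [r1, r2, r3]
  simp

lemma isPermWord_restr {n i j : ℕ} {σ : List ℕ} (h : IsPermWord n σ) (hi : 1 ≤ i)
    (hij : i ≤ j) (hj : j ≤ n) : IsPermWord (j - i + 1) (restr σ i j) := by
  unfold IsPermWord at *
  have hperm : (restr σ i j).Perm (restr (List.range' 1 n) i j) := (h.filter _).map _
  rw [restr_range' hi hij hj] at hperm
  exact hperm

lemma RSK_restr_eq_restrTab {σ : List ℕ} (hσ : σ.Nodup) (i j : ℕ) :
    RSK (restr σ i j) = restrTab (RSK σ) i j := by
  have h1 := kEq_word_RSK σ hσ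
  have h2 := h1.restr i j
  exact RSK_eq_of_kEq h2 (restr_nodup i j hσ)

lemma tabRel_restr {n : ℕ} {A B : List (List ℕ)} (h : tabRel n A B) (i j : ℕ)
    (hi : 1 ≤ i) (hij : i < j) (hj : j ≤ n) :
    tabRel (j - i + 1) (restrTab A i j) (restrTab B i j) := by
  obtain ⟨σ, τ, hσ, hτ, hAS, hBT, hle⟩ := h
  have hσnd : σ.Nodup := hσ.nodup_iff.2 List.nodup_range'
  have hτnd : τ.Nodup := hτ.nodup_iff.2 List.nodup_range'
  refine ⟨restr σ i j, restr τ i j, isPermWord_restr hσ hi hij.le hj,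
    isPermWord_restr hτ hi hij.le hj, ?_, ?_, wordLE_restr hσnd hτnd i j hi hle⟩
  · rw [← hAS]; exact RSK_restr_eq_restrTab hσnd i j
  · rw [← hBT]; exact RSK_restr_eq_restrTab hτnd i j

end Assembly
/-- The weak order on `SYT_n` restricts to segments: `S ≤_weak T` implies
`st(S_[i,j]) ≤_weak st(T_[i,j])` in `SYT_{j-i+1}` for all `1 ≤ i < j ≤ n`. -/
theorem weak_order_restricts_to_segments (n : ℕ) (S T : List (List ℕ))
    (hS : IsSYT n S) (hT : IsSYT n T) (h : tabLE n S T) :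
    ∀ i j : ℕ, 1 ≤ i → i < j → j ≤ n →
      tabLE (j - i + 1) (restrTab S i j) (restrTab T i j) := by
  intro i j hi hij hjn
  clear hS hT
  induction h with
  | single hrel => exact Relation.TransGen.single (tabRel_restr hrel i j hi hij hjn)
  | tail _ hrel ih => exact Relation.TransGen.tail ih (tabRel_restr hrel i j hi hij hjn)
end

section
/- Let ≤ be any partial order on SYT_n that is stronger than the weak order (i.e., S ≤_weak T implies S ≤ T) and that restricts to segments (i.e., S ≤ T implies st(S_[i,j]) ≤ st(T_[i,j]) for all 1 ≤ i < j ≤ n). Then the map from (SYT_n, ≤) to the Boolean lattice (2^{[n−1]}, ⊆) sending each tableau T to its descent set Des(T) is order preserving. -/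
namespace DescentMapAux

lemma f_iff (i x : ℕ) : (decide (i ≤ x ∧ x ≤ i + 1) = true) ↔ (x = i ∨ x = i + 1) := by
  simp; omega

lemma W0 {i : ℕ} {w : List ℕ} (h1 : w.count i = 0) (h2 : w.count (i+1) = 0) :
    w.filter (fun x => decide (i ≤ x ∧ x ≤ i + 1)) = [] := by
  rw [List.filter_eq_nil_iff]
  intro a ha hfa
  rcases (f_iff i a).1 hfa with rfl | rfl
  · exact List.count_eq_zero.1 h1 ha
  · exact List.count_eq_zero.1 h2 ha

lemma W1 {i : ℕ} {w : List ℕ} (h1 : w.count i = 0) (h2 : w.count (i+1) = 1) :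
    w.filter (fun x => decide (i ≤ x ∧ x ≤ i + 1)) = [i+1] := by
  induction w with
  | nil => simp at h2
  | cons a w ih =>
    rw [List.count_cons] at h1 h2
    simp only [beq_iff_eq] at h1 h2
    by_cases hfa : (i ≤ a ∧ a ≤ i + 1)
    · have ha : a = i ∨ a = i + 1 := by omega
      rcases ha with rfl | rfl
      · rw [if_pos rfl] at h1; exact absurd h1 (by omega)
      · simp only [List.filter_cons, decide_eq_true hfa, if_pos]
        rw [if_pos rfl] at h2
        rw [if_neg (show ¬((i+1) = i) by omega)] at h1
        have hc2 : w.count (i+1) = 0 := by omega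
        rw [W0 (by omega : w.count i = 0) hc2]
    · rw [List.filter_cons_of_neg (by simpa using hfa)]
      have hai : ¬(a = i) := by omega
      have hai1 : ¬(a = i + 1) := by omega
      rw [if_neg hai] at h1
      rw [if_neg hai1] at h2
      exact ih (by omega) (by omega)

lemma W1' {i : ℕ} {w : List ℕ} (h1 : w.count i = 1) (h2 : w.count (i+1) = 0) :
    w.filter (fun x => decide (i ≤ x ∧ x ≤ i + 1)) = [i] := by
  induction w with
  | nil => simp at h1
  | cons a w ih =>
    rw [List.count_cons] at h1 h2
    simp only [beq_iff_eq] at h1 h2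
    by_cases hfa : (i ≤ a ∧ a ≤ i + 1)
    · have ha : a = i ∨ a = i + 1 := by omega
      rcases ha with rfl | rfl
      · simp only [List.filter_cons, decide_eq_true hfa, if_pos]
        rw [if_pos rfl] at h1
        rw [if_neg (show ¬(a = a + 1) by omega)] at h2
        have hc1 : w.count a = 0 := by omega
        rw [W0 hc1 (by omega : w.count (a+1) = 0)]
      · rw [if_pos rfl] at h2; exact absurd h2 (by omega)
    · rw [List.filter_cons_of_neg (by simpa using hfa)]
      have hai : ¬(a = i) := by omega
      have hai1 : ¬(a = i + 1) := by omega
      rw [if_neg hai] at h1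
      rw [if_neg hai1] at h2
      exact ih (by omega) (by omega)

lemma W2 {i : ℕ} {w : List ℕ} (hs : w.Pairwise (· < ·)) (h1 : w.count i = 1)
    (h2 : w.count (i+1) = 1) :
    w.filter (fun x => decide (i ≤ x ∧ x ≤ i + 1)) = [i, i+1] := by
  induction w with
  | nil => simp at h1
  | cons a w ih =>
    rw [List.pairwise_cons] at hs
    rw [List.count_cons] at h1 h2
    simp only [beq_iff_eq] at h1 h2
    by_cases hfa : (i ≤ a ∧ a ≤ i + 1)
    · have ha : a = i ∨ a = i + 1 := by omega
      rcases ha with rfl | rfl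
      · simp only [List.filter_cons, decide_eq_true hfa, if_pos]
        rw [if_pos rfl] at h1
        rw [if_neg (show ¬(a = a + 1) by omega)] at h2
        have hw1 : w.count a = 0 := by omega
        have hw2 : w.count (a+1) = 1 := by omega
        rw [W1 hw1 hw2]
      · -- i must occur in w, but everything in w is > i+1
        exfalso
        rw [if_neg (show ¬((i+1) = i) by omega)] at h1
        have hiw : i ∈ w := List.count_pos_iff.1 (by omega)
        have := hs.1 i hiw
        omega
    · rw [List.filter_cons_of_neg (by simpa using hfa)]
      have hai : ¬(a = i) := by omega
      have hai1 : ¬(a = i + 1) := by omega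
      rw [if_neg hai] at h1
      rw [if_neg hai1] at h2
      exact ih hs.2 (by omega) (by omega)

lemma keyK {i : ℕ} : ∀ (L : List (List ℕ)), (∀ r ∈ L, r.Pairwise (· < ·)) →
    L.flatten.count i = 1 → L.flatten.count (i+1) = 1 →
    (L.reverse.flatten.filter (fun x => decide (i ≤ x ∧ x ≤ i + 1)) = [i, i+1] ∧
       L.findIdx (fun r => decide ((i+1) ∈ r)) ≤ L.findIdx (fun r => decide (i ∈ r))) ∨
    (L.reverse.flatten.filter (fun x => decide (i ≤ x ∧ x ≤ i + 1)) = [i+1, i] ∧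
       L.findIdx (fun r => decide (i ∈ r)) < L.findIdx (fun r => decide ((i+1) ∈ r))) := by
  intro L
  induction L with
  | nil => intro _ h1 _; simp at h1
  | cons r L ih =>
    intro hs h1 h2
    have hperm : L.reverse.flatten.Perm L.flatten := (List.reverse_perm L).flatten
    rw [List.flatten_cons, List.count_append] at h1 h2
    have hrev : (r :: L).reverse.flatten = L.reverse.flatten ++ r := by
      simp
    rw [hrev, List.filter_append]
    have hcase1 : (r.count i = 1 ∧ L.flatten.count i = 0) ∨
        (r.count i = 0 ∧ L.flatten.count i = 1) := by omega
    have hcase2 : (r.count (i+1) = 1 ∧ L.flatten.count (i+1) = 0) ∨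
        (r.count (i+1) = 0 ∧ L.flatten.count (i+1) = 1) := by omega
    have hsr : r.Pairwise (· < ·) := hs r (by simp)
    rcases hcase1 with ⟨hr1, hL1⟩ | ⟨hr1, hL1⟩ <;> rcases hcase2 with ⟨hr2, hL2⟩ | ⟨hr2, hL2⟩
    · -- both in r
      left
      have hir : i ∈ r := List.count_pos_iff.1 (by omega)
      have hi1r : (i+1) ∈ r := List.count_pos_iff.1 (by omega)
      constructor
      · rw [W2 hsr hr1 hr2, W0 (by rw [hperm.count_eq]; exact hL1)
          (by rw [hperm.count_eq]; exact hL2)]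
        simp
      · rw [List.findIdx_cons, List.findIdx_cons]
        simp [hir, hi1r]
    · -- i in r, i+1 below
      right
      have hir : i ∈ r := List.count_pos_iff.1 (by omega)
      have hi1r : (i+1) ∉ r := List.count_eq_zero.1 hr2
      constructor
      · rw [W1' hr1 hr2, W1 (by rw [hperm.count_eq]; exact hL1)
          (by rw [hperm.count_eq]; exact hL2)]
        rfl
      · rw [List.findIdx_cons, List.findIdx_cons]
        simp [hir, hi1r]
    · -- i+1 in r, i below
      left
      have hir : i ∉ r := List.count_eq_zero.1 hr1
      have hi1r : (i+1) ∈ r := List.count_pos_iff.1 (by omega)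
      constructor
      · rw [W1 hr1 hr2, W1' (by rw [hperm.count_eq]; exact hL1)
          (by rw [hperm.count_eq]; exact hL2)]
        rfl
      · rw [List.findIdx_cons, List.findIdx_cons]
        simp [hir, hi1r]
    · -- neither in r
      have hir : i ∉ r := List.count_eq_zero.1 hr1
      have hi1r : (i+1) ∉ r := List.count_eq_zero.1 hr2
      have := ih (fun q hq => hs q (by simp [hq])) hL1 hL2
      rw [List.findIdx_cons, List.findIdx_cons]
      rcases this with ⟨hf, hle⟩ | ⟨hf, hlt⟩
      · left
        refine ⟨by rw [hf, W0 hr1 hr2]; simp, ?_⟩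
        simp [hir, hi1r]
        omega
      · right
        refine ⟨by rw [hf, W0 hr1 hr2]; simp, ?_⟩
        simp [hir, hi1r] at hlt ⊢
        omega

lemma count_flatten_one {n : ℕ} {t : List (List ℕ)} (ht : IsSYT n t)
    {v : ℕ} (h1 : 1 ≤ v) (h2 : v ≤ n) : t.flatten.count v = 1 := by
  obtain ⟨-, -, -, hperm⟩ := ht
  rw [hperm.count_eq]
  have hmem : v ∈ List.range' 1 n := by
    rw [List.mem_range'_1]
    exact ⟨h1, by omega⟩
  have hnd : (List.range' 1 n).Nodup := by simp [List.nodup_range']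
  have := List.nodup_iff_count_le_one.1 hnd v
  have := List.count_pos_iff.2 hmem
  omega

lemma main_restr {n i : ℕ} {t : List (List ℕ)} (ht : IsSYT n t)
    (hi : 1 ≤ i) (hin : i < n) :
    (restrTab t i (i+1) = [[1,2]] ∧ ¬ (rowOf t i < rowOf t (i+1))) ∨
    (restrTab t i (i+1) = [[1],[2]] ∧ rowOf t i < rowOf t (i+1)) := by
  have h1 : t.flatten.count i = 1 := count_flatten_one ht hi (by omega)
  have h2 : t.flatten.count (i+1) = 1 := count_flatten_one ht (by omega) (by omega)
  have hK := keyK t ht.1 h1 h2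
  have hmap1 : i - (i - 1) = 1 := by omega
  have hmap2 : i + 1 - (i - 1) = 2 := by omega
  rcases hK with ⟨hf, hle⟩ | ⟨hf, hlt⟩
  · left
    constructor
    · show RSK (restr (readWord t) i (i+1)) = [[1,2]]
      unfold restr readWord
      rw [hf]
      simp [hmap1, hmap2]
      rfl
    · show ¬ (rowOf t i < rowOf t (i+1))
      unfold rowOf
      omega
  · right
    constructor
    · show RSK (restr (readWord t) i (i+1)) = [[1],[2]]
      unfold restr readWord
      rw [hf]
      simp [hmap1, hmap2]
      rfl
    · exact hlt

lemma isSYT_row : IsSYT 2 [[1,2]] := by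
  refine ⟨?_, ?_, ?_, ?_⟩ <;> simp [List.Chain'] <;> decide

lemma isSYT_col : IsSYT 2 [[1],[2]] := by
  refine ⟨?_, ?_, ?_, ?_⟩ <;> simp [List.Chain'] <;> decide

lemma tabLE_two : tabLE 2 [[1,2]] [[1],[2]] := by
  refine Relation.TransGen.single ⟨[1,2], [2,1], ?_, ?_, rfl, rfl, ?_⟩
  · show [1,2].Perm (List.range' 1 2); decide
  · show [2,1].Perm (List.range' 1 2); decide
  · intro p hp
    obtain ⟨hlt, hm1, hm2, hidx⟩ := hp
    simp only [List.mem_cons, List.not_mem_nil, or_false] at hm1 hm2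
    exfalso
    rcases hm1 with h1 | h1 <;> rcases hm2 with h2 | h2 <;>
      rw [h1, h2] at hlt hidx <;> simp_all

end DescentMapAux

/-- Any partial order on `SYT_n` stronger than the weak order which
restricts to segments makes the descent map `T ↦ Des(T)` into `(2^[n-1], ⊆)`
order preserving. -/
theorem descent_map_order_preserving
    (le : ℕ → List (List ℕ) → List (List ℕ) → Prop)
    (hrefl : ∀ n S, IsSYT n S → le n S S)
    (htrans : ∀ n S T U, IsSYT n S → IsSYT n T → IsSYT n U →
      le n S T → le n T U → le n S U)
    (hantisymm : ∀ n S T, IsSYT n S → IsSYT n T → le n S T → le n T S → S = T)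
    (hstronger : ∀ n S T, IsSYT n S → IsSYT n T → tabLE n S T → le n S T)
    (hrestricts : ∀ n S T, IsSYT n S → IsSYT n T → le n S T →
      ∀ i j, 1 ≤ i → i < j → j ≤ n →
        le (j - i + 1) (restrTab S i j) (restrTab T i j)) :
    ∀ n S T, IsSYT n S → IsSYT n T → le n S T → DesT n S ⊆ DesT n T := by
  intro n S T hS hT hle i hiS
  obtain ⟨hi1, hin, hrow⟩ : 1 ≤ i ∧ i < n ∧ rowOf S i < rowOf S (i + 1) := hiS
  rcases DescentMapAux.main_restr hS hi1 hin with ⟨_, h⟩ | ⟨hSr, _⟩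
  · exact absurd hrow h
  rcases DescentMapAux.main_restr hT hi1 hin with ⟨hTr, _⟩ | ⟨_, hrowT⟩
  · exfalso
    have hres := hrestricts n S T hS hT hle i (i + 1) hi1 (by omega) (by omega)
    rw [show i + 1 - i + 1 = 2 from by omega, hSr, hTr] at hres
    have hle2 := hstronger 2 [[1,2]] [[1],[2]] DescentMapAux.isSYT_row
      DescentMapAux.isSYT_col DescentMapAux.tabLE_two
    have heq := hantisymm 2 [[1,2]] [[1],[2]] DescentMapAux.isSYT_row
      DescentMapAux.isSYT_col hle2 hres
    simp at heq
  · exact ⟨hi1, hin, hrowT⟩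
end

section
/- The weak order on SYT_n is not preserved by the single dual Knuth relation (inner translation) map: for the tableaux S with rows (1,2,4),(3,5,6) and T with rows (1,2,4),(3,6),(5) in SYT_6, one has S ≤_weak T; but the tableaux S' with rows (1,2,3),(4,5,6) and T' with rows (1,2,5),(3,6),(4), which are obtained from S and T respectively by applying a single dual Knuth relation determined by the triple {3,4,5}, satisfy S' ≰_weak T'. -/
/-- Auxiliary: the left inversion pairs of a word, as a list. -/
def invPairsB (w : List ℕ) : List (ℕ × ℕ) :=
  w.flatMap fun b => w.filterMap fun a =>
    if a < b ∧ w.idxOf b < w.idxOf a then some (a, b) else none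

lemma mem_invPairsB {w : List ℕ} {p : ℕ × ℕ} :
    p ∈ invPairsB w ↔ p.1 < p.2 ∧ p.1 ∈ w ∧ p.2 ∈ w ∧ w.idxOf p.2 < w.idxOf p.1 := by
  obtain ⟨a, b⟩ := p
  simp only [invPairsB, List.mem_flatMap, List.mem_filterMap,
    Option.ite_none_right_eq_some, Option.some.injEq, Prod.mk.injEq]
  constructor
  · rintro ⟨b', hb', a', ha', ⟨h1, h2⟩, rfl, rfl⟩
    exact ⟨h1, ha', hb', h2⟩
  · rintro ⟨h1, ha, hb, h2⟩
    exact ⟨b, hb, a, ha, ⟨h1, h2⟩, rfl, rfl⟩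

lemma wordLE_iff {u w : List ℕ} :
    wordLE u w ↔ ∀ p ∈ invPairsB u, p ∈ invPairsB w := by
  constructor
  · intro h p hp
    exact mem_invPairsB.2 (h (mem_invPairsB.1 hp))
  · intro h p hp
    exact mem_invPairsB.1 (h p (mem_invPairsB.2 hp))

/-- All ways to insert `x` into a list. -/
def inserts (x : ℕ) : List ℕ → List (List ℕ)
  | [] => [[x]]
  | y :: ys => (x :: y :: ys) :: (inserts x ys).map (y :: ·)

/-- All permutations of a list. -/
def permsOf : List ℕ → List (List ℕ)
  | [] => [[]]
  | x :: xs => (permsOf xs).flatMap (inserts x)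

lemma head_mem_inserts (x : ℕ) (w : List ℕ) : (x :: w) ∈ inserts x w := by
  cases w <;> simp [inserts]

lemma mem_inserts {x : ℕ} {w : List ℕ} (hx : x ∈ w) : w ∈ inserts x (w.erase x) := by
  induction w with
  | nil => cases hx
  | cons y ys ih =>
    by_cases hxy : y = x
    · subst hxy
      rw [List.erase_cons_head]
      exact head_mem_inserts y ys
    · rw [List.erase_cons_tail (by simp [hxy])]
      have hx' : x ∈ ys := by
        rcases List.mem_cons.1 hx with h | h
        · exact absurd h.symm hxy
        · exact h
      exact List.mem_cons.2 (Or.inr (List.mem_map.2 ⟨ys, ih hx', rfl⟩))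

lemma mem_permsOf {w l : List ℕ} (h : w.Perm l) : w ∈ permsOf l := by
  induction l generalizing w with
  | nil => simp [permsOf, h.eq_nil]
  | cons x xs ih =>
    have hx : x ∈ w := h.mem_iff.2 List.mem_cons_self
    have h2 : List.Perm (w.erase x) xs := by
      have := h.erase x
      rwa [List.erase_cons_head] at this
    exact List.mem_flatMap.2 ⟨w.erase x, ih h2, mem_inserts hx⟩

/-- All permutation words of `{1,…,6}`. -/
def perms6 : List (List ℕ) := permsOf (List.range' 1 6)

/-- The set of tableaux in `SYT_6` that are `≥` (weakly reachable backward from)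
the tableau `T'` with rows (1,2,5),(3,6),(4). -/
def Cset : List (List (List ℕ)) :=
  [[[1,2,3,4,5],[6]],[[1,2,3,4,5,6]],[[1,2,3,5],[4,6]],[[1,2,3,5,6],[4]],
   [[1,2,3,6],[4,5]],[[1,2,4,5],[3],[6]],[[1,2,4,5],[3,6]],[[1,2,4,5,6],[3]],
   [[1,2,5],[3,4,6]],[[1,2,5],[3,6],[4]],[[1,2,5,6],[3],[4]],[[1,2,5,6],[3,4]]]

def keyB : Bool := perms6.all fun τ =>
  !(decide (RSK τ ∈ Cset)) ||
    (let iτ := invPairsB τ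
     perms6.all fun σ =>
       !((invPairsB σ).all fun p => decide (p ∈ iτ)) || decide (RSK σ ∈ Cset))

set_option maxRecDepth 8000 in
set_option maxHeartbeats 4000000 in
lemma keyB_true : keyB = true := by decide

lemma key : ∀ τ ∈ perms6, RSK τ ∈ Cset →
    ∀ σ ∈ perms6, (∀ p ∈ invPairsB σ, p ∈ invPairsB τ) → RSK σ ∈ Cset := by
  have hk := keyB_true
  unfold keyB at hk
  simp only [List.all_eq_true, Bool.or_eq_true, Bool.not_eq_true',
    decide_eq_false_iff_not, decide_eq_true_eq] at hk
  intro τ hτ hC σ hσ hle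
  rcases hk τ hτ with h | h
  · exact absurd hC h
  · rcases h σ hσ with h2 | h2
    · exact absurd hle (by simpa using h2)
    · exact h2

lemma mem_perms6 {w : List ℕ} (h : IsPermWord 6 w) : w ∈ perms6 := mem_permsOf h

lemma backward_step {A B : List (List ℕ)} (h : tabRel 6 A B) (hB : B ∈ Cset) :
    A ∈ Cset := by
  obtain ⟨σ, τ, hσ, hτ, rfl, rfl, hle⟩ := h
  exact key τ (mem_perms6 hτ) hB σ (mem_perms6 hσ) (wordLE_iff.1 hle)

/-- The weak order on `SYT_6` is not preserved by the inner
translation map given by the single dual Knuth relation on the triple {3,4,5}: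
`S ≤_weak T` for `S` with rows (1,2,4),(3,5,6) and `T` with rows (1,2,4),(3,6),(5),
but `S' ≰_weak T'` for the translated tableaux `S'` with rows (1,2,3),(4,5,6) and
`T'` with rows (1,2,5),(3,6),(4). -/
theorem weak_order_not_preserved_by_inner_translation :
    tabLE 6 [[1,2,4],[3,5,6]] [[1,2,4],[3,6],[5]] ∧
    ¬ tabLE 6 [[1,2,3],[4,5,6]] [[1,2,5],[3,6],[4]] := by
  constructor
  · exact Relation.TransGen.single
      ⟨[3,1,5,2,6,4], [5,3,1,2,6,4], by unfold IsPermWord; decide, by unfold IsPermWord; decide, by decide, by decide,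
       wordLE_iff.2 (by decide)⟩
  · intro h
    have hmem : ∀ a, Relation.ReflTransGen (tabRel 6) a [[1,2,5],[3,6],[4]] → a ∈ Cset := by
      intro a ha
      induction ha using Relation.ReflTransGen.head_induction_on with
      | refl => decide
      | head h' _ ih => exact backward_step h' ih
    exact absurd (hmem _ h.to_reflTransGen) (by decide)
end

section
/- The relation defining the weak order on SYT_n is not transitive before taking transitive closure: for the tableaux R with rows (1,2,5),(3,4), S with rows (1,4,5),(2),(3), and T with rows (1,4),(2,5),(3) in SYT_5, one has R <_weak S (since 34125 ≤_weak 34215 with I(34125)=R, I(34215)=S) and S <_weak T (since 32145 ≤_weak 32154 with I(32145)=S, I(32154)=T), hence R <_weak T; yet for every ρ ∈ Y_R and every τ ∈ Y_T, the pair (2,4) lies in Inv_L(ρ) but not in Inv_L(τ), so there exist no ρ ∈ Y_R and τ ∈ Y_T with ρ ≤_weak τ. -/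
private lemma wle1 : wordLE [3,4,1,2,5] [3,4,2,1,5] := by
  rintro ⟨a,b⟩ ⟨h1,h2,h3,h4⟩
  simp only [List.mem_cons, List.not_mem_nil, or_false] at h2 h3
  simp only [InvL, Set.mem_setOf_eq]
  rcases h2 with rfl|rfl|rfl|rfl|rfl <;> rcases h3 with rfl|rfl|rfl|rfl|rfl <;>
    · revert h1 h4; decide

private lemma wle2 : wordLE [3,2,1,4,5] [3,2,1,5,4] := by
  rintro ⟨a,b⟩ ⟨h1,h2,h3,h4⟩
  simp only [List.mem_cons, List.not_mem_nil, or_false] at h2 h3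
  simp only [InvL, Set.mem_setOf_eq]
  rcases h2 with rfl|rfl|rfl|rfl|rfl <;> rcases h3 with rfl|rfl|rfl|rfl|rfl <;>
    · revert h1 h4; decide

private lemma ipw1 : IsPermWord 5 [3,4,1,2,5] := by unfold IsPermWord; decide
private lemma ipw2 : IsPermWord 5 [3,4,2,1,5] := by unfold IsPermWord; decide
private lemma ipw3 : IsPermWord 5 [3,2,1,4,5] := by unfold IsPermWord; decide
private lemma ipw4 : IsPermWord 5 [3,2,1,5,4] := by unfold IsPermWord; decide

set_option maxRecDepth 40000 in
private lemma key1 : ∀ ρ ∈ (List.range' 1 5).permutations',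
    RSK ρ = [[1,2,5],[3,4]] →
    (2 < 4 ∧ 2 ∈ ρ ∧ 4 ∈ ρ ∧ ρ.idxOf 4 < ρ.idxOf 2) := by decide

set_option maxRecDepth 40000 in
private lemma key2 : ∀ τ ∈ (List.range' 1 5).permutations',
    RSK τ = [[1,4],[2,5],[3]] →
    ¬(2 < 4 ∧ 2 ∈ τ ∧ 4 ∈ τ ∧ τ.idxOf 4 < τ.idxOf 2) := by decide

/-- The relation generating the weak order on `SYT_5` is not
transitive before taking transitive closure: with `R`, `S`, `T` as below,
`R ≤ S` (via `34125 ≤_weak 34215`) and `S ≤ T` (via `32145 ≤_weak 32154`), hence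
`R <_weak T` in the transitive closure; yet every `ρ ∈ Y_R` has the inversion
`(2,4)` while no `τ ∈ Y_T` does, so no `ρ ∈ Y_R`, `τ ∈ Y_T` satisfy `ρ ≤_weak τ`. -/
theorem weak_order_needs_transitive_closure :
    RSK [3,4,1,2,5] = [[1,2,5],[3,4]] ∧
    RSK [3,4,2,1,5] = [[1,4,5],[2],[3]] ∧
    wordLE [3,4,1,2,5] [3,4,2,1,5] ∧
    RSK [3,2,1,4,5] = [[1,4,5],[2],[3]] ∧
    RSK [3,2,1,5,4] = [[1,4],[2,5],[3]] ∧
    wordLE [3,2,1,4,5] [3,2,1,5,4] ∧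
    tabLE 5 [[1,2,5],[3,4]] [[1,4],[2,5],[3]] ∧
    (∀ ρ : List ℕ, IsPermWord 5 ρ → RSK ρ = [[1,2,5],[3,4]] →
      ((2, 4) : ℕ × ℕ) ∈ InvL ρ) ∧
    (∀ τ : List ℕ, IsPermWord 5 τ → RSK τ = [[1,4],[2,5],[3]] →
      ((2, 4) : ℕ × ℕ) ∉ InvL τ) ∧
    ¬ ∃ ρ τ : List ℕ, IsPermWord 5 ρ ∧ IsPermWord 5 τ ∧
        RSK ρ = [[1,2,5],[3,4]] ∧ RSK τ = [[1,4],[2,5],[3]] ∧ wordLE ρ τ := by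
  have k1 : ∀ ρ : List ℕ, IsPermWord 5 ρ → RSK ρ = [[1,2,5],[3,4]] →
      ((2, 4) : ℕ × ℕ) ∈ InvL ρ := by
    intro ρ hρ hR
    exact key1 ρ (List.mem_permutations'.2 hρ) hR
  have k2 : ∀ τ : List ℕ, IsPermWord 5 τ → RSK τ = [[1,4],[2,5],[3]] →
      ((2, 4) : ℕ × ℕ) ∉ InvL τ := by
    intro τ hτ hT h
    exact key2 τ (List.mem_permutations'.2 hτ) hT h
  refine ⟨rfl, rfl, wle1, rfl, rfl, wle2, ?_, k1, k2, ?_⟩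
  · exact Relation.TransGen.tail (Relation.TransGen.single
      ⟨[3,4,1,2,5], [3,4,2,1,5], ipw1, ipw2, rfl, rfl, wle1⟩)
      ⟨[3,2,1,4,5], [3,2,1,5,4], ipw3, ipw4, rfl, rfl, wle2⟩
  · rintro ⟨ρ, τ, hρ, hτ, hR, hT, hle⟩
    exact k2 τ hτ hT (hle (k1 ρ hρ hR))
end
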